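/- arXiv:1211.6006 — 5 statements merged into one kernel-verified Lean document; each statement's English description precedes it below -/
import Mathlib

section
/- Let p be a prime, n ≥ 1, and R a commutative ring. For every maximal ideal 𝔐 of the ring W_n(R) of p-typical Witt vectors of length n there exists a maximal ideal 𝔭 of R such that the quotient map W_n(R) → W_n(R)/𝔐 factors through the ring homomorphism W_n(R) → W_n(R_𝔭) induced by the localization map R → R_𝔭. (This is the p-typical case of Lemma 1.1.6 of the paper.) -/
/-!
Statement 0: For a prime `p`, `n ≥ 1` and a commutative ring `R`, every maximal ideal `𝔐`
of the ring `W_n(R)` of `p`-typical Witt vectors of length `n` admits a maximal ideal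
`𝔭 ⊆ R` such that `W_n(R) → W_n(R)/𝔐` factors through `W_n(R) → W_n(R_𝔭)`.
-/

namespace TruncatedWittVector

variable {p : ℕ} [Fact p.Prime] {n : ℕ} {R S : Type*} [CommRing R] [CommRing S]

/-- Functoriality of truncated Witt vectors: the ring homomorphism
`W_n(R) → W_n(S)` induced by a ring homomorphism `R → S`. -/
noncomputable def map (f : R →+* S) :
    TruncatedWittVector p n R →+* TruncatedWittVector p n S :=
  RingHom.liftOfRightInverse (WittVector.truncate n) out truncateFun_out
    ⟨(WittVector.truncate n).comp (WittVector.map f), by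
      intro x hx
      rw [WittVector.mem_ker_truncate] at hx
      rw [RingHom.mem_ker, RingHom.comp_apply, ← RingHom.mem_ker,
        WittVector.mem_ker_truncate]
      intro i hi
      rw [WittVector.map_coeff, hx i hi, map_zero]⟩

/-- `map f` is the coefficientwise application of `f`. -/
theorem map_coeff' (f : R →+* S) (x : TruncatedWittVector p n R) (i : Fin n) :
    (map f x).coeff i = f (x.coeff i) := by
  obtain ⟨y, rfl⟩ := WittVector.truncate_surjective p n R x
  have h1 : map f (WittVector.truncate n y) =
      WittVector.truncate n (WittVector.map f y) :=
    RingHom.liftOfRightInverse_comp_apply _ _ _ _ y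
  rw [h1, WittVector.coeff_truncate, WittVector.coeff_truncate, WittVector.map_coeff]

end TruncatedWittVector


open Function

namespace WittVector

variable {p : ℕ} [hp : Fact p.Prime] {R S : Type*} [CommRing R] [CommRing S]

local notation "𝕎" => WittVector p

theorem ghostComponent_zero_apply' (x : 𝕎 R) : ghostComponent 0 x = x.coeff 0 := by
  rw [ghostComponent_apply, wittPolynomial_zero, MvPolynomial.aeval_X]

theorem exists_eq_verschiebung {x : 𝕎 R} (h : x.coeff 0 = 0) :
    ∃ y : 𝕎 R, verschiebung y = x := by
  refine ⟨WittVector.mk p fun i => x.coeff (i + 1), WittVector.ext fun i => ?_⟩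
  cases i with
  | zero => rw [verschiebung_coeff_zero, h]
  | succ i => rw [verschiebung_coeff_succ]; rfl

theorem exists_teichmuller_add (x : 𝕎 R) :
    ∃ (a : R) (z : 𝕎 R), x = teichmuller p a + verschiebung z := by
  have h0 : (x - teichmuller p (x.coeff 0)).coeff 0 = 0 := by
    rw [← ghostComponent_zero_apply', map_sub, ghostComponent_zero_apply',
      ghostComponent_zero_apply', teichmuller_coeff_zero, sub_self]
  obtain ⟨z, hz⟩ := exists_eq_verschiebung h0
  exact ⟨x.coeff 0, z, by rw [hz]; ring⟩

theorem iterate_verschiebung_add (m : ℕ) (x y : 𝕎 R) :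
    verschiebung^[m] (x + y) = verschiebung^[m] x + verschiebung^[m] y := by
  induction m with
  | zero => rfl
  | succ m ih => rw [iterate_succ_apply', ih, map_add, iterate_succ_apply',
      iterate_succ_apply']

theorem iterate_verschiebung_nsmul (m c : ℕ) (x : 𝕎 R) :
    verschiebung^[m] (c • x) = c • verschiebung^[m] x := by
  induction m with
  | zero => rfl
  | succ m ih => rw [iterate_succ_apply', ih, map_nsmul, iterate_succ_apply']

theorem iterate_verschiebung_zero (m : ℕ) :
    verschiebung^[m] (0 : 𝕎 R) = 0 := by
  induction m with
  | zero => rfl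
  | succ m ih => rw [iterate_succ_apply', ih, map_zero]

theorem iterate_frobenius_mul' (m : ℕ) (x y : 𝕎 R) :
    frobenius^[m] (x * y) = frobenius^[m] x * frobenius^[m] y := by
  induction m generalizing x y with
  | zero => rfl
  | succ m ih => rw [iterate_succ_apply, iterate_succ_apply, iterate_succ_apply,
      map_mul, ih]

theorem iterate_frobenius_natCast' (m c : ℕ) :
    frobenius^[m] ((c : 𝕎 R)) = c := by
  induction m with
  | zero => rfl
  | succ m ih => rw [iterate_succ_apply, map_natCast, ih]

theorem iterate_frobenius_one (m : ℕ) :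
    frobenius^[m] ((1 : 𝕎 R)) = 1 := by
  induction m with
  | zero => rfl
  | succ m ih => rw [iterate_succ_apply, map_one, ih]

theorem iterate_frobenius_verschiebung' (m : ℕ) (x : 𝕎 R) :
    frobenius^[m] (verschiebung^[m] x) = x * (p : 𝕎 R) ^ m := by
  induction m generalizing x with
  | zero => simp
  | succ m ih =>
      rw [iterate_succ_apply' (f := verschiebung), iterate_succ_apply (f := frobenius),
        frobenius_verschiebung, iterate_frobenius_mul', ih, iterate_frobenius_natCast',
        pow_succ, mul_assoc]

/-- Key product formula. -/
theorem iterate_verschiebung_mul_one (j i : ℕ) (hji : j ≤ i) (x : 𝕎 R) :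
    verschiebung^[j] x * verschiebung^[i] (1 : 𝕎 R) =
      (p ^ j : ℕ) • verschiebung^[i] (frobenius^[i - j] x) := by
  have hi : i = j + (i - j) := by omega
  rw [iterate_verschiebung_mul_left]
  calc verschiebung^[j] (x * frobenius^[j] (verschiebung^[i] 1))
      = verschiebung^[j] (x * frobenius^[j]
          (verschiebung^[j] (verschiebung^[i-j] 1))) := by
        rw [← iterate_add_apply, ← hi]
    _ = verschiebung^[j] (x * (verschiebung^[i-j] 1 * (p : 𝕎 R) ^ j)) := by
        rw [iterate_frobenius_verschiebung']
    _ = verschiebung^[j] ((p ^ j : ℕ) • (verschiebung^[i-j] 1 * x)) := by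
        rw [nsmul_eq_mul, Nat.cast_pow]
        ring_nf
    _ = (p ^ j : ℕ) • verschiebung^[j] (verschiebung^[i-j] (1 * frobenius^[i-j] x)) := by
        rw [iterate_verschiebung_nsmul, iterate_verschiebung_mul_left]
    _ = (p ^ j : ℕ) • verschiebung^[i] (frobenius^[i - j] x) := by
        rw [← iterate_add_apply, ← hi, one_mul]

theorem iterate_verschiebung_mul_teichmuller (i : ℕ) (a b : R) :
    verschiebung^[i] (teichmuller p a) * verschiebung^[i] (teichmuller p b) =
      (p ^ i : ℕ) • verschiebung^[i] (teichmuller p (a * b)) := by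
  rw [iterate_verschiebung_mul_left, iterate_frobenius_verschiebung',
    show teichmuller p a * (teichmuller p b * (p : 𝕎 R) ^ i) =
      (p ^ i : ℕ) • (teichmuller p a * teichmuller p b) from by
        rw [nsmul_eq_mul, Nat.cast_pow]; ring,
    iterate_verschiebung_nsmul, ← map_mul]

theorem ghostComponent_iterate_verschiebung (m j : ℕ) (x : 𝕎 R) :
    ghostComponent (m + j) (verschiebung^[j] x) = (p : R) ^ j * ghostComponent m x := by
  induction j with
  | zero => simp
  | succ j ih =>
      rw [iterate_succ_apply', show m + (j+1) = (m + j) + 1 from rfl,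
        ghostComponent_verschiebung, ih, pow_succ]
      ring

theorem ghostComponent_iterate_verschiebung_succ_self (i : ℕ) (x : 𝕎 R) :
    ghostComponent i (verschiebung^[i+1] x) = 0 := by
  have h := ghostComponent_iterate_verschiebung 0 i (verschiebung x)
  rw [Nat.zero_add] at h
  rw [iterate_succ_apply, h, ghostComponent_zero_verschiebung, mul_zero]

theorem ghostComponent_zero_iterate_frobenius (m : ℕ) (x : 𝕎 R) :
    ghostComponent 0 (frobenius^[m] x) = ghostComponent m x := by
  induction m generalizing x with
  | zero => rfl
  | succ m ih => rw [iterate_succ_apply, ih, ghostComponent_frobenius]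

theorem exists_sum_teichmuller_verschiebung (m : ℕ) (x : 𝕎 R) :
    ∃ (a : ℕ → R) (z : 𝕎 R),
      x = (∑ j ∈ Finset.range m, verschiebung^[j] (teichmuller p (a j))) +
        verschiebung^[m] z := by
  induction m with
  | zero => exact ⟨fun _ => 0, x, by simp⟩
  | succ m ih =>
      obtain ⟨a, z, h⟩ := ih
      obtain ⟨b, z', hz⟩ := exists_teichmuller_add z
      refine ⟨fun j => if j = m then b else a j, z', ?_⟩
      rw [h, hz, iterate_verschiebung_add, ← iterate_succ_apply]
      simp only [Finset.sum_range_succ]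
      simp only [if_true]
      have hsum : ∑ x ∈ Finset.range m,
          verschiebung^[x] (teichmuller p (if x = m then b else a x)) =
          ∑ x ∈ Finset.range m, verschiebung^[x] (teichmuller p (a x)) :=
        Finset.sum_congr rfl fun j hj => by
          rw [if_neg (Finset.mem_range.mp hj).ne]
      rw [hsum]
      ring

end WittVector


namespace TruncatedWittVector

variable {p : ℕ} [Fact p.Prime] {n : ℕ} {R S : Type*} [CommRing R] [CommRing S]

theorem map_truncate (f : R →+* S) (X : WittVector p R) :
    map f (WittVector.truncate n X) = WittVector.truncate n (WittVector.map f X) :=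
  RingHom.liftOfRightInverse_comp_apply _ _ _ _ X

/-- The `i`-th ghost component as a ring homomorphism on truncated Witt vectors. -/
noncomputable def ghC (i : Fin n) :
    TruncatedWittVector p n R →+* R :=
  RingHom.liftOfRightInverse (WittVector.truncate n) out truncateFun_out
    ⟨WittVector.ghostComponent i, by
      intro x hx
      rw [WittVector.mem_ker_truncate] at hx
      rw [RingHom.mem_ker, WittVector.ghostComponent_apply, aeval_wittPolynomial]
      refine Finset.sum_eq_zero fun j hj => ?_
      rw [Finset.mem_range] at hj
      rw [hx j (lt_of_lt_of_le hj (Nat.succ_le_of_lt i.isLt)), zero_pow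
        (pow_ne_zero _ (Fact.out (p := p.Prime)).ne_zero), mul_zero]⟩

theorem ghC_truncate (i : Fin n) (X : WittVector p R) :
    ghC i (WittVector.truncate n X) = WittVector.ghostComponent i X :=
  RingHom.liftOfRightInverse_comp_apply _ _ _ _ X

theorem ghC_natural (f : R →+* S) (i : Fin n) (x : TruncatedWittVector p n R) :
    ghC i (map f x) = f (ghC i x) := by
  obtain ⟨X, rfl⟩ := WittVector.truncate_surjective p n R x
  rw [map_truncate, ghC_truncate, ghC_truncate, WittVector.ghostComponent_apply,
    WittVector.ghostComponent_apply, aeval_wittPolynomial, aeval_wittPolynomial,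
    map_sum]
  refine Finset.sum_congr rfl fun j _ => ?_
  rw [map_mul, map_pow, map_natCast, map_pow, WittVector.map_coeff]

theorem truncate_iterate_verschiebung_eq_zero {m : ℕ} (hm : n ≤ m)
    (z : WittVector p R) :
    WittVector.truncate n ((WittVector.verschiebung (p := p))^[m] z) = 0 := by
  rw [← RingHom.mem_ker, WittVector.mem_ker_truncate]
  intro i hi
  exact WittVector.iterate_verschiebung_coeff_eq_zero z (lt_of_lt_of_le hi hm)

end TruncatedWittVector

set_option maxHeartbeats 1000000 in
theorem stmt_0 (p : ℕ) [Fact p.Prime] (n : ℕ) (hn : 1 ≤ n) (R : Type*) [CommRing R]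
    (𝔐 : Ideal (TruncatedWittVector p n R)) (h𝔐 : 𝔐.IsMaximal) :
    ∃ (𝔭 : Ideal R) (_ : 𝔭.IsMaximal),
      ∃ g : TruncatedWittVector p n (Localization.AtPrime 𝔭) →+*
            (TruncatedWittVector p n R ⧸ 𝔐),
        g.comp (TruncatedWittVector.map (algebraMap R (Localization.AtPrime 𝔭))) =
          Ideal.Quotient.mk 𝔐 := by
  classical
  haveI := h𝔐
  haveI := h𝔐.isPrime
  let qh : WittVector p R →+* TruncatedWittVector p n R ⧸ 𝔐 :=
    (Ideal.Quotient.mk 𝔐).comp (WittVector.truncate n)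
  have hqh : ∀ X, qh X = Ideal.Quotient.mk 𝔐 (WittVector.truncate n X) := fun _ => rfl
  have hqhV : ∀ (m : ℕ) (z : WittVector p R), n ≤ m →
      qh ((WittVector.verschiebung (p := p))^[m] z) = 0 := by
    intro m z h
    rw [hqh, TruncatedWittVector.truncate_iterate_verschiebung_eq_zero h, map_zero]
  obtain ⟨i, hi, e, hB, hC, hD⟩ :
      ∃ i : ℕ, i < n ∧ ∃ e : TruncatedWittVector p n R ⧸ 𝔐,
        e * ((p : TruncatedWittVector p n R ⧸ 𝔐)) ^ i = 1 ∧
        e * qh ((WittVector.verschiebung (p := p))^[i] 1) = 1 ∧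
        ∀ z : WittVector p R, qh ((WittVector.verschiebung (p := p))^[i+1] z) = 0 := by
    by_cases hu : IsUnit ((p : TruncatedWittVector p n R ⧸ 𝔐))
    · -- p is invertible in the residue field
      have hpinv : (↑(hu.unit⁻¹) : TruncatedWittVector p n R ⧸ 𝔐) * (p : TruncatedWittVector p n R ⧸ 𝔐) = 1 := by
        have h := hu.unit.inv_mul
        rwa [IsUnit.unit_spec] at h
      have hvmul : ∀ j j' : ℕ, j ≤ j' →
          qh ((WittVector.verschiebung (p := p))^[j] (1 : WittVector p R)) *
            qh ((WittVector.verschiebung (p := p))^[j'] 1) =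
          (p : TruncatedWittVector p n R ⧸ 𝔐) ^ j * qh ((WittVector.verschiebung (p := p))^[j'] 1) := by
        intro j j' h
        have hL := congrArg qh
          (WittVector.iterate_verschiebung_mul_one j j' h (1 : WittVector p R))
        rw [WittVector.iterate_frobenius_one, map_mul, map_nsmul, nsmul_eq_mul,
          Nat.cast_pow] at hL
        exact hL
      have hex : ∃ j, qh ((WittVector.verschiebung (p := p))^[j] (1 : WittVector p R)) = 0 :=
        ⟨n, hqhV n 1 le_rfl⟩
      have hfind := Nat.find_spec hex
      have hmne : Nat.find hex ≠ 0 := by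
        intro h
        rw [h] at hfind
        simp at hfind
      set i := Nat.find hex - 1 with hidef
      have hisucc : i + 1 = Nat.find hex := by omega
      have hvi0 : qh ((WittVector.verschiebung (p := p))^[i] (1 : WittVector p R)) ≠ 0 :=
        Nat.find_min hex (by omega)
      have hvip : qh ((WittVector.verschiebung (p := p))^[i+1] (1 : WittVector p R)) = 0 := by
        rw [hisucc]; exact hfind
      have hile : i < n := by
        have : Nat.find hex ≤ n := Nat.find_le (hqhV n 1 le_rfl)
        omega
      have hvi : qh ((WittVector.verschiebung (p := p))^[i] (1 : WittVector p R)) =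
          (p : TruncatedWittVector p n R ⧸ 𝔐) ^ i := by
        have h2 : (qh ((WittVector.verschiebung (p := p))^[i] (1 : WittVector p R)) -
            (p : TruncatedWittVector p n R ⧸ 𝔐) ^ i) *
            qh ((WittVector.verschiebung (p := p))^[i] (1 : WittVector p R)) = 0 := by
          rw [sub_mul, hvmul i i le_rfl]; ring
        rcases mul_eq_zero.mp h2 with h | h
        · exact sub_eq_zero.mp h
        · exact absurd h hvi0
      refine ⟨i, hile, (↑(hu.unit⁻¹) : TruncatedWittVector p n R ⧸ 𝔐) ^ i, ?_, ?_, fun z => ?_⟩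
      · rw [← mul_pow, hpinv, one_pow]
      · rw [hvi, ← mul_pow, hpinv, one_pow]
      · have hL := congrArg qh
          (WittVector.iterate_verschiebung_mul_one (i+1) (i+1) le_rfl z)
        rw [Nat.sub_self, Function.iterate_zero_apply, map_mul, hvip, mul_zero,
          map_nsmul, nsmul_eq_mul, Nat.cast_pow] at hL
        have hX : qh ((WittVector.verschiebung (p := p))^[i+1] z) =
            (↑(hu.unit⁻¹) : TruncatedWittVector p n R ⧸ 𝔐) ^ (i+1) *
              ((p : TruncatedWittVector p n R ⧸ 𝔐) ^ (i+1) * qh ((WittVector.verschiebung (p := p))^[i+1] z)) := by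
          rw [← mul_assoc, ← mul_pow, hpinv, one_pow, one_mul]
        rw [hX, ← hL, mul_zero]
    · -- p is zero in the residue field
      have hp0 : ((p : TruncatedWittVector p n R ⧸ 𝔐)) = 0 := by
        by_contra h
        obtain ⟨b, hb⟩ := Ideal.Quotient.exists_inv h
        exact hu (IsUnit.of_mul_eq_one b hb)
      refine ⟨0, by omega, 1, by simp, by simp, fun z => ?_⟩
      have hvv : WittVector.verschiebung z * WittVector.verschiebung z
          = (p : ℕ) • WittVector.verschiebung (z * z) := by
        rw [← WittVector.verschiebung_mul_frobenius z (WittVector.verschiebung z),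
          WittVector.frobenius_verschiebung,
          show z * (z * (p : WittVector p R)) = (p : ℕ) • (z * z) from by
            rw [nsmul_eq_mul]; ring,
          map_nsmul]
      have h2 : qh (WittVector.verschiebung z) * qh (WittVector.verschiebung z) = 0 := by
        rw [← map_mul, hvv, map_nsmul, nsmul_eq_mul, hp0, zero_mul]
      have h3 := mul_self_eq_zero.mp h2
      rw [zero_add, Function.iterate_one]
      exact h3
  -- the character χ : R → K
  let χ : R →+* TruncatedWittVector p n R ⧸ 𝔐 :=
  { toFun := fun r =>
      e * qh ((WittVector.verschiebung (p := p))^[i] (WittVector.teichmuller p r))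
    map_one' := by rw [map_one]; exact hC
    map_zero' := by
      rw [WittVector.teichmuller_zero, WittVector.iterate_verschiebung_zero,
        map_zero, mul_zero]
    map_mul' := fun a b => by
      have key : qh ((WittVector.verschiebung (p := p))^[i] (WittVector.teichmuller p a)) *
          qh ((WittVector.verschiebung (p := p))^[i] (WittVector.teichmuller p b)) =
          (p : TruncatedWittVector p n R ⧸ 𝔐) ^ i *
            qh ((WittVector.verschiebung (p := p))^[i] (WittVector.teichmuller p (a*b))) := by
        rw [← map_mul, WittVector.iterate_verschiebung_mul_teichmuller, map_nsmul,
          nsmul_eq_mul, Nat.cast_pow]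
      show e * qh _ = (e * qh _) * (e * qh _)
      symm
      calc (e * qh ((WittVector.verschiebung (p := p))^[i] (WittVector.teichmuller p a))) *
            (e * qh ((WittVector.verschiebung (p := p))^[i] (WittVector.teichmuller p b)))
          = e * e *
            (qh ((WittVector.verschiebung (p := p))^[i] (WittVector.teichmuller p a)) *
             qh ((WittVector.verschiebung (p := p))^[i] (WittVector.teichmuller p b))) := by
            ring
        _ = e * e * ((p : TruncatedWittVector p n R ⧸ 𝔐) ^ i *
            qh ((WittVector.verschiebung (p := p))^[i] (WittVector.teichmuller p (a*b)))) := by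
            rw [key]
        _ = e * (e * (p : TruncatedWittVector p n R ⧸ 𝔐) ^ i) *
            qh ((WittVector.verschiebung (p := p))^[i] (WittVector.teichmuller p (a*b))) := by
            ring
        _ = e * qh ((WittVector.verschiebung (p := p))^[i]
              (WittVector.teichmuller p (a*b))) := by
            rw [hB, mul_one]
    map_add' := fun a b => by
      have h0 : (WittVector.teichmuller p (a + b) - WittVector.teichmuller p a -
          WittVector.teichmuller p b).coeff 0 = 0 := by
        rw [← WittVector.ghostComponent_zero_apply', map_sub, map_sub,
          WittVector.ghostComponent_zero_apply', WittVector.ghostComponent_zero_apply',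
          WittVector.ghostComponent_zero_apply', WittVector.teichmuller_coeff_zero,
          WittVector.teichmuller_coeff_zero, WittVector.teichmuller_coeff_zero]
        ring
      obtain ⟨d, hd⟩ := WittVector.exists_eq_verschiebung h0
      have hsplit : WittVector.teichmuller p (a + b) = WittVector.teichmuller p a +
          WittVector.teichmuller p b + WittVector.verschiebung d := by
        rw [hd]; ring
      show e * qh _ = e * qh _ + e * qh _
      rw [hsplit, WittVector.iterate_verschiebung_add, WittVector.iterate_verschiebung_add,
        ← Function.iterate_succ_apply, map_add, map_add, hD, add_zero, mul_add] }
  -- the factorization over ghost component i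
  have hfact : ∀ x : TruncatedWittVector p n R,
      χ (TruncatedWittVector.ghC ⟨i, hi⟩ x) = Ideal.Quotient.mk 𝔐 x := by
    intro x
    obtain ⟨X, rfl⟩ := WittVector.truncate_surjective p n R x
    obtain ⟨a, z, hX⟩ := WittVector.exists_sum_teichmuller_verschiebung (i+1) X
    rw [TruncatedWittVector.ghC_truncate, hX]
    rw [map_add, map_sum, WittVector.ghostComponent_iterate_verschiebung_succ_self,
      add_zero]
    have hterm : ∀ j ∈ Finset.range (i+1),
        WittVector.ghostComponent (R := R) i
          ((WittVector.verschiebung (p := p))^[j] (WittVector.teichmuller p (a j))) =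
        (p : R) ^ j * (a j) ^ (p ^ (i - j)) := by
      intro j hj
      have hj' : j ≤ i := Nat.lt_succ_iff.mp (Finset.mem_range.mp hj)
      have h := WittVector.ghostComponent_iterate_verschiebung (i - j) j
        (WittVector.teichmuller p (a j))
      rw [Nat.sub_add_cancel hj'] at h
      rw [h, WittVector.ghostComponent_teichmuller]
    rw [Finset.sum_congr rfl hterm, map_sum χ]
    have hR : Ideal.Quotient.mk 𝔐 (WittVector.truncate n
        ((∑ j ∈ Finset.range (i+1),
          (WittVector.verschiebung (p := p))^[j] (WittVector.teichmuller p (a j))) +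
          (WittVector.verschiebung (p := p))^[i+1] z)) =
        ∑ j ∈ Finset.range (i+1),
          qh ((WittVector.verschiebung (p := p))^[j] (WittVector.teichmuller p (a j))) := by
      rw [← hqh, map_add, hD z, add_zero, map_sum]
    rw [hR]
    refine Finset.sum_congr rfl fun j hj => ?_
    have hj' : j ≤ i := Nat.lt_succ_iff.mp (Finset.mem_range.mp hj)
    rw [map_mul, map_pow, map_natCast]
    show (p : TruncatedWittVector p n R ⧸ 𝔐) ^ j *
        (e * qh ((WittVector.verschiebung (p := p))^[i]
          (WittVector.teichmuller p ((a j) ^ (p ^ (i - j)))))) =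
      qh ((WittVector.verschiebung (p := p))^[j] (WittVector.teichmuller p (a j)))
    have h0 : (WittVector.teichmuller p ((a j) ^ (p ^ (i - j))) -
        (WittVector.frobenius (p := p))^[i-j] (WittVector.teichmuller p (a j))).coeff 0
        = 0 := by
      rw [← WittVector.ghostComponent_zero_apply', map_sub,
        WittVector.ghostComponent_teichmuller,
        WittVector.ghostComponent_zero_iterate_frobenius,
        WittVector.ghostComponent_teichmuller, pow_zero, pow_one, sub_self]
    obtain ⟨d, hd⟩ := WittVector.exists_eq_verschiebung h0
    have hsplit : WittVector.teichmuller p ((a j) ^ (p ^ (i - j))) =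
        (WittVector.frobenius (p := p))^[i-j] (WittVector.teichmuller p (a j)) +
          WittVector.verschiebung d := by
      rw [hd]; ring
    rw [hsplit, WittVector.iterate_verschiebung_add, ← Function.iterate_succ_apply,
      map_add, hD, add_zero]
    have hL := congrArg qh
      (WittVector.iterate_verschiebung_mul_one j i hj' (WittVector.teichmuller p (a j)))
    rw [map_mul, map_nsmul, nsmul_eq_mul, Nat.cast_pow] at hL
    calc (p : TruncatedWittVector p n R ⧸ 𝔐) ^ j * (e * qh ((WittVector.verschiebung (p := p))^[i]
            ((WittVector.frobenius (p := p))^[i-j] (WittVector.teichmuller p (a j)))))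
        = e * ((p : TruncatedWittVector p n R ⧸ 𝔐) ^ j * qh ((WittVector.verschiebung (p := p))^[i]
            ((WittVector.frobenius (p := p))^[i-j] (WittVector.teichmuller p (a j))))) := by
          ring
      _ = e * (qh ((WittVector.verschiebung (p := p))^[j] (WittVector.teichmuller p (a j))) *
            qh ((WittVector.verschiebung (p := p))^[i] (1 : WittVector p R))) := by
          rw [hL]
      _ = qh ((WittVector.verschiebung (p := p))^[j] (WittVector.teichmuller p (a j))) *
            (e * qh ((WittVector.verschiebung (p := p))^[i] (1 : WittVector p R))) := by
          ring
      _ = qh ((WittVector.verschiebung (p := p))^[j] (WittVector.teichmuller p (a j))) := by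
          rw [hC, mul_one]
  -- conclude via a maximal ideal over the kernel of χ
  have hker : RingHom.ker χ ≠ ⊤ := by
    intro h
    have h1 : (1 : R) ∈ RingHom.ker χ := h ▸ Submodule.mem_top
    rw [RingHom.mem_ker, map_one] at h1
    exact one_ne_zero h1
  obtain ⟨𝔭, h𝔭max, h𝔭⟩ := Ideal.exists_le_maximal _ hker
  haveI := h𝔭max
  have hunits : ∀ s : 𝔭.primeCompl, IsUnit (χ s) := by
    intro s
    rcases eq_or_ne (χ s) 0 with h0 | h0
    · exact absurd (h𝔭 (by rwa [RingHom.mem_ker])) s.prop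
    · obtain ⟨b, hb⟩ := Ideal.Quotient.exists_inv h0
      exact IsUnit.of_mul_eq_one b hb
  refine ⟨𝔭, h𝔭max,
    (IsLocalization.lift hunits).comp (TruncatedWittVector.ghC ⟨i, hi⟩), ?_⟩
  ext x
  rw [RingHom.comp_apply, RingHom.comp_apply, TruncatedWittVector.ghC_natural,
    IsLocalization.lift_eq, hfact]
end

section
/- Let p be a prime and n ≥ 1. If R is a local commutative ring whose residue field has characteristic p, then the ring W_n(R) of p-typical Witt vectors of length n is a local ring. -/
/-!
Statement 2: Let `p` be a prime and `n ≥ 1`. If `R` is a local commutative ring whose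
residue field has characteristic `p`, then the ring `W_n(R)` of `p`-typical Witt vectors
of length `n` is a local ring.
-/

namespace Stmt2Aux

open WittVector Function

variable {p : ℕ} [hp : Fact p.Prime] {R : Type*} [CommRing R]

local notation "𝕎" => WittVector p

lemma iterate_verschiebung_coeff_lt (a : 𝕎 R) {i k : ℕ} (hik : i < k) :
    (verschiebung^[k] a).coeff i = 0 := by
  induction k generalizing i with
  | zero => omega
  | succ k ih =>
    rw [Function.iterate_succ_apply']
    cases i with
    | zero => exact verschiebung_coeff_zero _
    | succ i => rw [verschiebung_coeff_succ]; exact ih (by omega)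

lemma eq_iterate_verschiebung {k : ℕ} {z : 𝕎 R} (h : ∀ i < k, z.coeff i = 0) :
    z = verschiebung^[k] (WittVector.mk p fun i => z.coeff (i + k)) := by
  ext i
  rcases lt_or_ge i k with hik | hik
  · rw [iterate_verschiebung_coeff_lt _ hik, h i hik]
  · obtain ⟨j, rfl⟩ := Nat.exists_eq_add_of_le hik
    rw [add_comm k j, iterate_verschiebung_coeff]
    rfl

lemma frobenius_iterate_p (k : ℕ) :
    (frobenius (p := p) (R := R))^[k] ((p : 𝕎 R)) = (p : 𝕎 R) := by
  induction k with
  | zero => rfl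
  | succ k ih => rw [Function.iterate_succ_apply, map_natCast, ih]

lemma frobenius_iterate_map_mul (k : ℕ) (x y : 𝕎 R) :
    (frobenius (p := p) (R := R))^[k] (x * y) =
      (frobenius (p := p) (R := R))^[k] x * (frobenius (p := p) (R := R))^[k] y := by
  induction k generalizing x y with
  | zero => rfl
  | succ k ih => rw [Function.iterate_succ_apply, Function.iterate_succ_apply,
      Function.iterate_succ_apply, map_mul, ih]

lemma frobenius_iterate_verschiebung_iterate (b : 𝕎 R) (k : ℕ) :
    (frobenius (p := p) (R := R))^[k] (verschiebung^[k] b) = b * (p : 𝕎 R) ^ k := by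
  induction k with
  | zero => simp
  | succ k ih =>
    rw [Function.iterate_succ_apply (f := ⇑(frobenius (p := p) (R := R))),
      Function.iterate_succ_apply' (f := ⇑(verschiebung (p := p) (R := R))),
      frobenius_verschiebung, frobenius_iterate_map_mul, frobenius_iterate_p, ih,
      pow_succ, mul_assoc]

lemma exists_inv [IsLocalRing R] (hpu : ¬IsUnit ((p : R))) (k : ℕ) (a : 𝕎 R) :
    ∃ b : 𝕎 R, WittVector.truncate (k + 2)
      ((1 + verschiebung^[k + 1] a) * (1 + verschiebung^[k + 1] b)) = 1 := by
  set a₀ := a.coeff 0 with ha₀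
  have hmem : -(a₀ * (p : R) ^ (k + 1)) ∈ nonunits R := by
    rw [mem_nonunits_iff]
    intro h
    apply hpu
    have h2 : IsUnit ((-(a₀ * (p : R) ^ k)) * (p : R)) := by
      convert h using 1; ring
    exact isUnit_of_mul_isUnit_right h2
  have hu : IsUnit (1 + a₀ * (p : R) ^ (k + 1)) := by
    have := IsLocalRing.isUnit_one_sub_self_of_mem_nonunits _ hmem
    rwa [sub_neg_eq_add] at this
  obtain ⟨u, hu⟩ := hu
  set b₀ : R := -(a₀ * ↑u⁻¹) with hb₀
  refine ⟨WittVector.mk p fun i => if i = 0 then b₀ else 0, ?_⟩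
  set b : 𝕎 R := WittVector.mk p fun i => if i = 0 then b₀ else 0 with hbdef
  have hb0 : b.coeff 0 = b₀ := rfl
  set c : 𝕎 R := a + b + a * (b * (p : 𝕎 R) ^ (k + 1)) with hc
  have hmul : verschiebung^[k + 1] a * verschiebung^[k + 1] b =
      verschiebung^[k + 1] (a * (b * (p : 𝕎 R) ^ (k + 1))) := by
    rw [iterate_verschiebung_mul_left, frobenius_iterate_verschiebung_iterate]
  have hadd : ∀ x y : 𝕎 R, verschiebung^[k + 1] x + verschiebung^[k + 1] y =
      verschiebung^[k + 1] (x + y) := by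
    intro x y
    induction (k + 1) with
    | zero => rfl
    | succ j ih =>
      rw [Function.iterate_succ_apply', Function.iterate_succ_apply',
        Function.iterate_succ_apply', ← map_add, ih]
  have hexp : (1 + verschiebung^[k + 1] a) * (1 + verschiebung^[k + 1] b) =
      1 + verschiebung^[k + 1] c := by
    have : (1 + verschiebung^[k + 1] a) * (1 + verschiebung^[k + 1] b) =
        1 + (verschiebung^[k + 1] a + verschiebung^[k + 1] b +
          verschiebung^[k + 1] a * verschiebung^[k + 1] b) := by ring
    rw [this, hmul, hadd, hadd, hc]
  have hc0 : c.coeff 0 = 0 := by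
    have : WittVector.constantCoeff c = 0 := by
      rw [hc, map_add, map_add, map_mul, map_mul, map_pow, map_natCast]
      show a₀ + b₀ + a₀ * (b₀ * (p : R) ^ (k + 1)) = 0
      have : a₀ + b₀ + a₀ * (b₀ * (p : R) ^ (k + 1)) =
          a₀ + b₀ * (1 + a₀ * (p : R) ^ (k + 1)) := by ring
      rw [this, ← hu, hb₀]
      linear_combination (-a₀) * u.inv_mul
    exact this
  have htrunc : WittVector.truncate (k + 2) (verschiebung^[k + 1] c) = 0 := by
    apply TruncatedWittVector.ext
    intro i
    rw [WittVector.coeff_truncate, TruncatedWittVector.coeff_zero]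
    rcases lt_or_ge (i : ℕ) (k + 1) with hik | hik
    · exact iterate_verschiebung_coeff_lt _ hik
    · have hieq : (i : ℕ) = 0 + (k + 1) := by omega
      rw [hieq, iterate_verschiebung_coeff, hc0]
  rw [hexp, map_add, map_one, htrunc, add_zero]

lemma isUnit_truncate [IsLocalRing R] (hpu : ¬IsUnit ((p : R))) (m : ℕ) (x : 𝕎 R)
    (hx : IsUnit (x.coeff 0)) : IsUnit (WittVector.truncate (m + 1) x) := by
  induction m with
  | zero =>
    obtain ⟨u, hu⟩ := hx
    refine IsUnit.of_mul_eq_one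
      (WittVector.truncate 1 (WittVector.mk p fun i => if i = 0 then (↑u⁻¹ : R) else 0)) ?_
    rw [← map_mul, ← map_one (WittVector.truncate (p := p) (R := R) 1)]
    apply TruncatedWittVector.ext
    intro i
    rw [WittVector.coeff_truncate, WittVector.coeff_truncate]
    have : (i : ℕ) = 0 := by omega
    rw [this, mul_coeff_zero, one_coeff_zero]
    show x.coeff 0 * (↑u⁻¹ : R) = 1
    rw [← hu, Units.mul_inv]
  | succ m ih =>
    obtain ⟨v, hv⟩ := ih
    obtain ⟨y, hy⟩ := WittVector.truncate_surjective p (m + 1) R (↑v⁻¹)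
    have hz : ∀ i < m + 1, (x * y - 1).coeff i = 0 := by
      rw [← WittVector.mem_ker_truncate, RingHom.mem_ker, map_sub, map_mul, hy, ← hv,
        Units.mul_inv, map_one, sub_self]
    set a : 𝕎 R := WittVector.mk p fun i => (x * y - 1).coeff (i + (m + 1)) with hadef
    have hxy : x * y = 1 + verschiebung^[m + 1] a := by
      have h1 := eq_iterate_verschiebung hz
      rw [hadef, ← h1]; ring
    obtain ⟨b, hb⟩ := exists_inv hpu m a
    refine IsUnit.of_mul_eq_one
      (WittVector.truncate (m + 2) (y * (1 + verschiebung^[m + 1] b))) ?_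
    rw [← map_mul, ← mul_assoc, hxy, hb]

end Stmt2Aux

theorem stmt_2 (p : ℕ) [Fact p.Prime] (n : ℕ) (hn : 1 ≤ n) (R : Type*) [CommRing R]
    [IsLocalRing R] [CharP (IsLocalRing.ResidueField R) p] :
    IsLocalRing (TruncatedWittVector p n R) := by
  obtain ⟨m, rfl⟩ : ∃ m, n = m + 1 := ⟨n - 1, (Nat.succ_pred_eq_of_pos hn).symm⟩
  have hpu : ¬IsUnit ((p : R)) := by
    intro h
    have h2 := (IsLocalRing.residue R).isUnit_map h
    rw [map_natCast, CharP.cast_eq_zero (IsLocalRing.ResidueField R) p] at h2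
    exact not_isUnit_zero h2
  haveI : Nontrivial (TruncatedWittVector p (m + 1) R) := by
    refine ⟨0, 1, fun h => ?_⟩
    have h1 : (1 : TruncatedWittVector p (m + 1) R) =
        WittVector.truncate (m + 1) (1 : WittVector p R) := (map_one _).symm
    rw [h1] at h
    have h2 := congrArg (TruncatedWittVector.coeff (0 : Fin (m + 1))) h
    rw [TruncatedWittVector.coeff_zero, WittVector.coeff_truncate] at h2
    simp only [Fin.val_zero, WittVector.one_coeff_zero] at h2
    exact zero_ne_one h2
  apply IsLocalRing.of_isUnit_or_isUnit_one_sub_self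
  intro a
  obtain ⟨x, rfl⟩ := WittVector.truncate_surjective p (m + 1) R a
  rcases IsLocalRing.isUnit_or_isUnit_one_sub_self (x.coeff 0) with h | h
  · exact Or.inl (Stmt2Aux.isUnit_truncate hpu m x h)
  · right
    have hsub : WittVector.truncate (m + 1) ((1 : WittVector p R) - x) =
        1 - WittVector.truncate (m + 1) x :=
      map_sub (WittVector.truncate (p := p) (R := R) (m + 1)) 1 x
    rw [← hsub]
    apply Stmt2Aux.isUnit_truncate hpu m
    have : ((1 : WittVector p R) - x).coeff 0 = 1 - x.coeff 0 := by
      have := map_sub (WittVector.constantCoeff (p := p) (R := R)) 1 x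
      simpa using this
    rwa [this]
end

section
/- Let p be a prime and n ≥ 1. If R is a finitely generated ℤ-algebra, then the ring W_n(R) of p-typical Witt vectors of length n is a Noetherian ring. -/
/-!
Statement 3: Let `p` be a prime and `n ≥ 1`. If `R` is a finitely generated `ℤ`-algebra,
then the ring `W_n(R)` of `p`-typical Witt vectors of length `n` is Noetherian.
-/

open MvPolynomial Function

namespace Stmt3Aux

variable {p : ℕ} [hp : Fact p.Prime] {R : Type*} [CommRing R]

theorem iter_vs_coeff_lt (m : ℕ) (w : WittVector p R) :
    ∀ j, j < m → ((⇑(WittVector.verschiebung (p := p) (R := R)))^[m] w).coeff j = 0 := by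
  induction m with
  | zero => intro j hj; exact absurd hj (Nat.not_lt_zero j)
  | succ m ih =>
    intro j hj
    rw [Function.iterate_succ_apply']
    match j with
    | 0 => exact WittVector.verschiebung_coeff_zero _
    | Nat.succ j =>
      rw [WittVector.verschiebung_coeff_succ]
      exact ih j (by omega)

theorem iter_vs_coeff_self (m : ℕ) (w : WittVector p R) :
    ((⇑(WittVector.verschiebung (p := p) (R := R)))^[m] w).coeff m = w.coeff 0 := by
  simpa using WittVector.iterate_verschiebung_coeff w m 0

theorem iter_vs_add (m : ℕ) (u v : WittVector p R) :
    (⇑(WittVector.verschiebung (p := p) (R := R)))^[m] (u + v)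
      = (⇑WittVector.verschiebung)^[m] u + (⇑WittVector.verschiebung)^[m] v := by
  induction m with
  | zero => rfl
  | succ m ih =>
    rw [Function.iterate_succ_apply', Function.iterate_succ_apply',
      Function.iterate_succ_apply', ih, map_add]

theorem iter_frob_coeff_zero (m : ℕ) (y : WittVector p R) :
    ((⇑(WittVector.frobenius (p := p) (R := R)))^[m] y).coeff 0
      = WittVector.ghostComponent m y := by
  induction m generalizing y with
  | zero => simp [WittVector.ghostComponent_apply, wittPolynomial_zero]
  | succ m ih =>
    rw [Function.iterate_succ_apply, ih, WittVector.ghostComponent_frobenius]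

theorem trunc_iter_vs (m : ℕ) (w : WittVector p R) :
    WittVector.truncate (m + 1) ((⇑(WittVector.verschiebung (p := p) (R := R)))^[m] w)
      = WittVector.truncate (m + 1)
          ((⇑WittVector.verschiebung)^[m] (WittVector.teichmuller p (w.coeff 0))) := by
  apply TruncatedWittVector.ext
  intro i
  rw [WittVector.coeff_truncate, WittVector.coeff_truncate]
  rcases Nat.lt_succ_iff_lt_or_eq.mp i.isLt with h | h
  · rw [iter_vs_coeff_lt m _ _ h, iter_vs_coeff_lt m _ _ h]
  · rw [h, iter_vs_coeff_self, iter_vs_coeff_self, WittVector.teichmuller_coeff_zero]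

/-- The structure map `MvPolynomial ι ℤ →+* W_m(R)` sending `X i` to the Teichmüller lift. -/
noncomputable def psi (p : ℕ) [Fact p.Prime] {R : Type*} [CommRing R] {ι : Type*}
    (x : ι → R) (m : ℕ) : MvPolynomial ι ℤ →+* TruncatedWittVector p m R :=
  (MvPolynomial.aeval fun i => WittVector.truncate m (WittVector.teichmuller p (x i))).toRingHom

theorem psi_trunc {ι : Type*} (x : ι → R) (m : ℕ) (a : MvPolynomial ι ℤ) :
    TruncatedWittVector.truncate (Nat.le_succ m) (psi p x (m + 1) a) = psi p x m a := by
  have h : (TruncatedWittVector.truncate (p := p) (R := R)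
        (Nat.le_succ m)).toIntAlgHom.comp
        (MvPolynomial.aeval fun i => WittVector.truncate (m + 1) (WittVector.teichmuller p (x i)))
      = MvPolynomial.aeval fun i => WittVector.truncate m (WittVector.teichmuller p (x i)) := by
    apply MvPolynomial.algHom_ext
    intro i
    simp [TruncatedWittVector.truncate_wittVector_truncate]
  exact DFunLike.congr_fun h a

/-- Finiteness of `R` over the polynomial ring acting through `q`-th powers of generators. -/
theorem spanAux {ι : Type*} [Finite ι] (x : ι → R)
    (hx : Algebra.adjoin ℤ (Set.range x) = ⊤) (q : ℕ) (hq : 0 < q) :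
    @Module.Finite (MvPolynomial ι ℤ) R _ _
      ((MvPolynomial.aeval fun i => x i ^ q).toRingHom.toAlgebra.toModule) := by
  letI : Algebra (MvPolynomial ι ℤ) R := (MvPolynomial.aeval fun i => x i ^ q).toRingHom.toAlgebra
  letI := Fintype.ofFinite ι
  set A := MvPolynomial ι ℤ
  set T : Set R := Set.range fun e : ι → Fin q => ∏ i, x i ^ (e i : ℕ) with hT
  have hmono : ∀ g : ι → ℕ, (∏ i, x i ^ g i) ∈ Submodule.span A T := by
    intro g
    have key : (∏ i, x i ^ g i)
        = (∏ i, (X i : A) ^ (g i / q)) • (∏ i, x i ^ (g i % q)) := by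
      rw [Algebra.smul_def, RingHom.algebraMap_toAlgebra, map_prod, ← Finset.prod_mul_distrib]
      apply Finset.prod_congr rfl
      intro i _
      rw [map_pow]
      show x i ^ g i = ((MvPolynomial.aeval fun i => x i ^ q) (X i)) ^ (g i / q) * x i ^ (g i % q)
      rw [MvPolynomial.aeval_X, ← pow_mul, ← pow_add, Nat.div_add_mod]
    rw [key]
    exact Submodule.smul_mem _ _
      (Submodule.subset_span ⟨fun i => ⟨g i % q, Nat.mod_lt _ hq⟩, rfl⟩)
  have htop : Submodule.span A T = ⊤ := by
    classical
    rw [eq_top_iff]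
    intro r hr0
    clear hr0
    have hr : r ∈ Algebra.adjoin ℤ (Set.range x) := by rw [hx]; trivial
    induction hr using Algebra.adjoin_induction with
    | mem y hy =>
      obtain ⟨i, rfl⟩ := hy
      have := hmono (fun j => if j = i then 1 else 0)
      simpa using this
    | algebraMap z =>
      have h1 : (1 : R) ∈ Submodule.span A T := by simpa using hmono (fun _ => 0)
      have : algebraMap ℤ R z = z • (1 : R) := by
        rw [Algebra.algebraMap_eq_smul_one]
      rw [this]
      exact zsmul_mem h1 z
    | add a b _ _ ha hb => exact Submodule.add_mem _ ha hb
    | mul a b _ _ ha hb =>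
      have hTT : Submodule.span A T * Submodule.span A T ≤ Submodule.span A T := by
        rw [Submodule.span_mul_span]
        refine Submodule.span_le.mpr ?_
        rintro r ⟨r1, hr1, r2, hr2, rfl⟩
        obtain ⟨e, rfl⟩ := hr1
        obtain ⟨f, rfl⟩ := hr2
        simp only [SetLike.mem_coe]
        show (∏ i, x i ^ ((e i : ℕ))) * (∏ i, x i ^ ((f i : ℕ))) ∈ Submodule.span A T
        rw [← Finset.prod_mul_distrib]
        simp_rw [← pow_add]
        exact hmono _
      exact hTT (Submodule.mul_mem_mul ha hb)
  exact ⟨Submodule.fg_def.mpr ⟨T, Set.finite_range _, htop⟩⟩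

theorem wittNoeth {ι : Type*} [Finite ι] (x : ι → R)
    (hx : Algebra.adjoin ℤ (Set.range x) = ⊤) (m : ℕ) :
    @IsNoetherian (MvPolynomial ι ℤ) (TruncatedWittVector p m R) _ _
      ((psi p x m).toAlgebra.toModule) := by
  induction m with
  | zero =>
    letI := (psi p x 0).toAlgebra
    haveI : Subsingleton (TruncatedWittVector p 0 R) :=
      ⟨fun a b => TruncatedWittVector.ext fun i => i.elim0⟩
    haveI : Finite (TruncatedWittVector p 0 R) := Finite.of_subsingleton
    exact isNoetherian_of_finite _ _
  | succ m ih =>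
    set A := MvPolynomial ι ℤ
    letI instW1 : Algebra A (TruncatedWittVector p (m + 1) R) := (psi p x (m + 1)).toAlgebra
    letI instW0 : Algebra A (TruncatedWittVector p m R) := (psi p x m).toAlgebra
    letI instR : Algebra A R := (MvPolynomial.aeval fun i => x i ^ p ^ m).toRingHom.toAlgebra
    haveI hfin : Module.Finite A R := spanAux x hx (p ^ m) (pow_pos hp.out.pos m)
    haveI hNR : IsNoetherian A R := isNoetherian_of_isNoetherianRing_of_finite A R
    haveI hN0 : IsNoetherian A (TruncatedWittVector p m R) := ih
    -- the additive map `r ↦ truncate (V^m (teichmuller r))`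
    have hadd : ∀ r s : R,
        WittVector.truncate (m + 1)
            ((⇑(WittVector.verschiebung (p := p) (R := R)))^[m]
              (WittVector.teichmuller p (r + s)))
          = WittVector.truncate (m + 1)
              ((⇑WittVector.verschiebung)^[m] (WittVector.teichmuller p r))
            + WittVector.truncate (m + 1)
              ((⇑WittVector.verschiebung)^[m] (WittVector.teichmuller p s)) := by
      intro r s
      rw [← map_add, ← iter_vs_add,
        trunc_iter_vs m (WittVector.teichmuller p r + WittVector.teichmuller p s),
        WittVector.add_coeff_zero, WittVector.teichmuller_coeff_zero,
        WittVector.teichmuller_coeff_zero]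
    let φ : R →+ TruncatedWittVector p (m + 1) R :=
      AddMonoidHom.mk'
        (fun r => WittVector.truncate (m + 1)
          ((⇑WittVector.verschiebung)^[m] (WittVector.teichmuller p r)))
        hadd
    have hXi : ∀ i, psi p x (m + 1) (X i)
        = WittVector.truncate (m + 1) (WittVector.teichmuller p (x i)) := by
      intro i
      simp [psi]
    have hcore : ∀ (i : ι) (r : R), φ (x i ^ p ^ m * r) = psi p x (m + 1) (X i) * φ r := by
      intro i r
      show WittVector.truncate (m + 1)
          ((⇑WittVector.verschiebung)^[m] (WittVector.teichmuller p (x i ^ p ^ m * r)))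
        = psi p x (m + 1) (X i) * WittVector.truncate (m + 1)
            ((⇑WittVector.verschiebung)^[m] (WittVector.teichmuller p r))
      rw [hXi, ← map_mul]
      rw [mul_comm (WittVector.teichmuller p (x i)), WittVector.iterate_verschiebung_mul_left]
      have hc : (WittVector.teichmuller p r
          * (⇑WittVector.frobenius)^[m] (WittVector.teichmuller p (x i))).coeff 0
          = x i ^ p ^ m * r := by
        rw [WittVector.mul_coeff_zero, WittVector.teichmuller_coeff_zero,
          iter_frob_coeff_zero, WittVector.ghostComponent_teichmuller, mul_comm]
      rw [trunc_iter_vs m (WittVector.teichmuller p r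
        * (⇑WittVector.frobenius)^[m] (WittVector.teichmuller p (x i))), hc]
    have hsmul : ∀ (a : A) (r : R),
        φ ((MvPolynomial.aeval fun i => x i ^ p ^ m) a * r) = psi p x (m + 1) a * φ r := by
      intro a
      induction a using MvPolynomial.induction_on with
      | C z =>
        intro r
        rw [MvPolynomial.aeval_C]
        have h1 : algebraMap ℤ R z * r = z • r := by
          rw [Algebra.algebraMap_eq_smul_one, smul_mul_assoc, one_mul]
        have h2 : psi p x (m + 1) (C z) = algebraMap ℤ _ z := by
          simp [psi]
        rw [h1, AddMonoidHom.map_zsmul, h2, Algebra.algebraMap_eq_smul_one, smul_mul_assoc,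
          one_mul]
      | add a b iha ihb =>
        intro r
        rw [map_add, add_mul, map_add, iha, ihb, map_add, add_mul]
      | mul_X a i iha =>
        intro r
        have e1 : (MvPolynomial.aeval fun i => x i ^ p ^ m) (a * X i) * r
            = (MvPolynomial.aeval fun i => x i ^ p ^ m) a * (x i ^ p ^ m * r) := by
          rw [map_mul, MvPolynomial.aeval_X, mul_assoc]
        rw [e1, iha, hcore, map_mul, mul_assoc]
    let f : R →ₗ[A] TruncatedWittVector p (m + 1) R :=
      { toFun := φ
        map_add' := map_add φ
        map_smul' := fun a r => hsmul a r }
    let g : TruncatedWittVector p (m + 1) R →ₗ[A] TruncatedWittVector p m R :=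
      { toFun := TruncatedWittVector.truncate (Nat.le_succ m)
        map_add' := map_add _
        map_smul' := fun a y => by
          show TruncatedWittVector.truncate (Nat.le_succ m) (psi p x (m + 1) a * y)
            = psi p x m a * TruncatedWittVector.truncate (Nat.le_succ m) y
          rw [map_mul, psi_trunc] }
    have hrange : LinearMap.range f = LinearMap.ker g := by
      apply le_antisymm
      · rintro y hy
        obtain ⟨r, rfl⟩ := hy
        rw [LinearMap.mem_ker]
        show TruncatedWittVector.truncate (Nat.le_succ m)
          (WittVector.truncate (m + 1)
            ((⇑WittVector.verschiebung)^[m] (WittVector.teichmuller p r))) = 0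
        rw [TruncatedWittVector.truncate_wittVector_truncate]
        apply TruncatedWittVector.ext
        intro i
        rw [WittVector.coeff_truncate, iter_vs_coeff_lt m _ _ i.isLt,
          TruncatedWittVector.coeff_zero]
      · intro y hy
        obtain ⟨w, rfl⟩ := WittVector.truncate_surjective p (m + 1) R y
        rw [LinearMap.mem_ker] at hy
        have hy' : WittVector.truncate m w = 0 := by
          have : g (WittVector.truncate (m + 1) w)
              = TruncatedWittVector.truncate (Nat.le_succ m) (WittVector.truncate (m + 1) w) :=
            rfl
          rw [this, TruncatedWittVector.truncate_wittVector_truncate] at hy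
          exact hy
        have h0 : ∀ i < m, w.coeff i = 0 :=
          (WittVector.mem_ker_truncate m w).mp (by rwa [RingHom.mem_ker])
        refine ⟨w.coeff m, ?_⟩
        show WittVector.truncate (m + 1)
            ((⇑WittVector.verschiebung)^[m] (WittVector.teichmuller p (w.coeff m)))
          = WittVector.truncate (m + 1) w
        apply TruncatedWittVector.ext
        intro i
        rw [WittVector.coeff_truncate, WittVector.coeff_truncate]
        rcases Nat.lt_succ_iff_lt_or_eq.mp i.isLt with h | h
        · rw [iter_vs_coeff_lt m _ _ h, h0 _ h]
        · rw [h, iter_vs_coeff_self, WittVector.teichmuller_coeff_zero]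
    exact isNoetherian_of_range_eq_ker f g hrange

end Stmt3Aux

theorem stmt_3 (p : ℕ) [Fact p.Prime] (n : ℕ) (hn : 1 ≤ n) (R : Type*) [CommRing R]
    [Algebra.FiniteType ℤ R] :
    IsNoetherianRing (TruncatedWittVector p n R) := by
  obtain ⟨s, hs⟩ := ‹Algebra.FiniteType ℤ R›.1
  have hx : Algebra.adjoin ℤ (Set.range fun a : { y // y ∈ s } => (a : R)) = ⊤ := by
    rw [Subtype.range_coe_subtype]
    convert hs using 2
    rfl
  haveI : Finite { y // y ∈ s } := inferInstance
  have H := Stmt3Aux.wittNoeth (p := p) (fun a : { y // y ∈ s } => (a : R)) hx n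
  letI := (Stmt3Aux.psi p (fun a : { y // y ∈ s } => (a : R)) n).toAlgebra
  rw [isNoetherianRing_iff]
  exact isNoetherian_of_tower (MvPolynomial { y // y ∈ s } ℤ) H
end

section
/- Let R be a finitely generated ℤ-algebra, 𝔪 ⊂ R a maximal ideal, p the characteristic of R/𝔪, and n ≥ 1. For an ideal I of the local ring R_𝔪, let W_n(I) denote the kernel of the ring homomorphism W_n(R_𝔪) → W_n(R_𝔪/I). Then the filtrations (W_n(𝔪^i R_𝔪))_{i≥1} and ((W_n(𝔪 R_𝔪))^i)_{i≥1} of W_n(R_𝔪) induce the same topology: for every i ≥ 1 there exists j ≥ 1 with (W_n(𝔪 R_𝔪))^j ⊆ W_n(𝔪^i R_𝔪), and for every i ≥ 1 there exists j ≥ 1 with W_n(𝔪^j R_𝔪) ⊆ (W_n(𝔪 R_𝔪))^i. -/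
/-- For an ideal `I ⊆ S`, the ideal `W_n(I) = ker (W_n(S) → W_n(S/I))` of `W_n(S)`. -/
noncomputable def wittIdeal (p n : ℕ) [Fact p.Prime] {S : Type*} [CommRing S] (I : Ideal S) :
    Ideal (TruncatedWittVector p n S) :=
  RingHom.ker (TruncatedWittVector.map (p := p) (n := n) (Ideal.Quotient.mk I))


section WittAux
open WittVector
variable {p : ℕ} [hp : Fact p.Prime] {S : Type*} [CommRing S]
local notation "𝕎" => WittVector p

-- frobenius of teichmuller
private theorem frob_teich_rat {R : Type*} (x : MvPolynomial R ℚ) :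
    frobenius (teichmuller p x) = teichmuller p (x ^ p) := by
  apply (ghostMap.bijective_of_invertible p (MvPolynomial R ℚ)).1
  funext n
  rw [ghostMap_apply, ghostMap_apply, ghostComponent_frobenius, ghostComponent_teichmuller,
    ghostComponent_teichmuller, ← pow_mul, ← pow_succ']

private theorem frob_teich_int {R : Type*} (x : MvPolynomial R ℤ) :
    frobenius (teichmuller p x) = teichmuller p (x ^ p) := by
  refine map_injective (MvPolynomial.map (Int.castRingHom ℚ))
    (MvPolynomial.map_injective _ Int.cast_injective) ?_
  rw [(frobenius_isPoly p).map, map_teichmuller, frob_teich_rat]; simp [map_pow]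

theorem frob_teich (r : S) :
    frobenius (teichmuller p r) = teichmuller p (r ^ p) := by
  rcases MvPolynomial.counit_surjective S r with ⟨x, rfl⟩
  rw [← map_teichmuller, ← (frobenius_isPoly p).map, frob_teich_int, map_teichmuller, map_pow]

theorem frob_teich_iter (r : S) (k : ℕ) :
    frobenius^[k] (teichmuller p r) = teichmuller p (r ^ p ^ k) := by
  induction k with
  | zero => simp
  | succ k ih =>
    rw [Function.iterate_succ_apply', ih, frob_teich, ← pow_mul, pow_succ]

/-- The subring of `S × S` of pairs congruent modulo `I`. -/
def pairSubring (I : Ideal S) : Subring (S × S) where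
  carrier := {x | x.2 - x.1 ∈ I}
  zero_mem' := by simp
  one_mem' := by simp
  add_mem' := by
    intro a b ha hb
    show (a + b).2 - (a + b).1 ∈ I
    have h : (a + b).2 - (a + b).1 = (a.2 - a.1) + (b.2 - b.1) := by
      simp only [Prod.fst_add, Prod.snd_add]; ring
    rw [h]; exact add_mem ha hb
  neg_mem' := by
    intro a ha
    show (-a).2 - (-a).1 ∈ I
    have h : (-a).2 - (-a).1 = -(a.2 - a.1) := by
      simp only [Prod.fst_neg, Prod.snd_neg]; ring
    rw [h]; exact neg_mem ha
  mul_mem' := by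
    intro a b ha hb
    show (a * b).2 - (a * b).1 ∈ I
    have h : (a * b).2 - (a * b).1 = a.2 * (b.2 - b.1) + b.1 * (a.2 - a.1) := by
      simp only [Prod.fst_mul, Prod.snd_mul]; ring
    rw [h]; exact add_mem (Ideal.mul_mem_left _ _ hb) (Ideal.mul_mem_left _ _ ha)

/-- The "quad" subring used for products. -/
def quadSubring (I J : Ideal S) : Subring (S × S × S × S) where
  carrier := {x | x.2.1 - x.1 ∈ I ∧ x.2.2.1 - x.1 ∈ J ∧
    x.2.2.2 - x.2.1 - x.2.2.1 + x.1 ∈ I * J}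
  zero_mem' := by refine ⟨?_, ?_, ?_⟩ <;> simp
  one_mem' := by refine ⟨?_, ?_, ?_⟩ <;> simp
  add_mem' := by
    rintro a b ⟨ha1, ha2, ha3⟩ ⟨hb1, hb2, hb3⟩
    refine ⟨?_, ?_, ?_⟩
    · show (a + b).2.1 - (a + b).1 ∈ I
      have h : (a + b).2.1 - (a + b).1 = (a.2.1 - a.1) + (b.2.1 - b.1) := by
        simp only [Prod.fst_add, Prod.snd_add]; ring
      rw [h]; exact add_mem ha1 hb1
    · show (a + b).2.2.1 - (a + b).1 ∈ J
      have h : (a + b).2.2.1 - (a + b).1 = (a.2.2.1 - a.1) + (b.2.2.1 - b.1) := by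
        simp only [Prod.fst_add, Prod.snd_add]; ring
      rw [h]; exact add_mem ha2 hb2
    · show (a + b).2.2.2 - (a + b).2.1 - (a + b).2.2.1 + (a + b).1 ∈ I * J
      have h : (a + b).2.2.2 - (a + b).2.1 - (a + b).2.2.1 + (a + b).1 =
        (a.2.2.2 - a.2.1 - a.2.2.1 + a.1) + (b.2.2.2 - b.2.1 - b.2.2.1 + b.1) := by
        simp only [Prod.fst_add, Prod.snd_add]; ring
      rw [h]; exact add_mem ha3 hb3
  neg_mem' := by
    rintro a ⟨ha1, ha2, ha3⟩
    refine ⟨?_, ?_, ?_⟩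
    · show (-a).2.1 - (-a).1 ∈ I
      have h : (-a).2.1 - (-a).1 = -(a.2.1 - a.1) := by
        simp only [Prod.fst_neg, Prod.snd_neg]; ring
      rw [h]; exact neg_mem ha1
    · show (-a).2.2.1 - (-a).1 ∈ J
      have h : (-a).2.2.1 - (-a).1 = -(a.2.2.1 - a.1) := by
        simp only [Prod.fst_neg, Prod.snd_neg]; ring
      rw [h]; exact neg_mem ha2
    · show (-a).2.2.2 - (-a).2.1 - (-a).2.2.1 + (-a).1 ∈ I * J
      have h : (-a).2.2.2 - (-a).2.1 - (-a).2.2.1 + (-a).1 =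
          -(a.2.2.2 - a.2.1 - a.2.2.1 + a.1) := by
        simp only [Prod.fst_neg, Prod.snd_neg]; ring
      rw [h]; exact neg_mem ha3
  mul_mem' := by
    rintro a b ⟨ha1, ha2, ha3⟩ ⟨hb1, hb2, hb3⟩
    refine ⟨?_, ?_, ?_⟩
    · show (a * b).2.1 - (a * b).1 ∈ I
      have h : (a * b).2.1 - (a * b).1 = a.2.1 * (b.2.1 - b.1) + b.1 * (a.2.1 - a.1) := by
        simp only [Prod.fst_mul, Prod.snd_mul]; ring
      rw [h]; exact add_mem (Ideal.mul_mem_left _ _ hb1) (Ideal.mul_mem_left _ _ ha1)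
    · show (a * b).2.2.1 - (a * b).1 ∈ J
      have h : (a * b).2.2.1 - (a * b).1 =
          a.2.2.1 * (b.2.2.1 - b.1) + b.1 * (a.2.2.1 - a.1) := by
        simp only [Prod.fst_mul, Prod.snd_mul]; ring
      rw [h]; exact add_mem (Ideal.mul_mem_left _ _ hb2) (Ideal.mul_mem_left _ _ ha2)
    · show (a * b).2.2.2 - (a * b).2.1 - (a * b).2.2.1 + (a * b).1 ∈ I * J
      have h : (a * b).2.2.2 - (a * b).2.1 - (a * b).2.2.1 + (a * b).1 =
          (a.2.1 - a.1) * (b.2.2.1 - b.1) + (a.2.2.1 - a.1) * (b.2.1 - b.1)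
          + b.2.2.2 * (a.2.2.2 - a.2.1 - a.2.2.1 + a.1)
          + (a.2.2.2 - (a.2.2.2 - a.2.1 - a.2.2.1 + a.1))
              * (b.2.2.2 - b.2.1 - b.2.2.1 + b.1) := by
        simp only [Prod.fst_mul, Prod.snd_mul]; ring
      rw [h]
      refine add_mem (add_mem (add_mem (Ideal.mul_mem_mul ha1 hb2) ?_)
        (Ideal.mul_mem_left _ _ ha3)) (Ideal.mul_mem_left _ _ hb3)
      rw [mul_comm (a.2.2.1 - a.1)]
      exact Ideal.mul_mem_mul hb1 ha2

theorem wcoeff_sub (I : Ideal S) (x y : 𝕎 S) (hx : ∀ r, x.coeff r ∈ I)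
    (hy : ∀ r, y.coeff r ∈ I) (r : ℕ) : (x - y).coeff r ∈ I := by
  set A := pairSubring (S := S) I with hA
  let π1 : A →+* S := (RingHom.fst S S).comp A.subtype
  let π2 : A →+* S := (RingHom.snd S S).comp A.subtype
  have memA : ∀ z : S × S, z ∈ A ↔ z.2 - z.1 ∈ I := fun z => Iff.rfl
  let X : 𝕎 A := WittVector.mk p fun r => ⟨(0, x.coeff r), by
    rw [memA]; simpa using hx r⟩
  let Y : 𝕎 A := WittVector.mk p fun r => ⟨(0, y.coeff r), by
    rw [memA]; simpa using hy r⟩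
  have hX1 : map π1 X = 0 := by ext r; rw [map_coeff, zero_coeff]; rfl
  have hY1 : map π1 Y = 0 := by ext r; rw [map_coeff, zero_coeff]; rfl
  have hX2 : map π2 X = x := by ext r; rw [map_coeff]; rfl
  have hY2 : map π2 Y = y := by ext r; rw [map_coeff]; rfl
  have key : π2 ((X - Y).coeff r) - π1 ((X - Y).coeff r) ∈ I :=
    ((X - Y).coeff r).property
  have e1 : π1 ((X - Y).coeff r) = 0 := by
    rw [← map_coeff, map_sub, hX1, hY1, sub_zero, zero_coeff]
  have e2 : π2 ((X - Y).coeff r) = (x - y).coeff r := by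
    rw [← map_coeff, map_sub, hX2, hY2]
  rwa [e1, e2, sub_zero] at key

theorem wcoeff_add (I : Ideal S) (x y : 𝕎 S) (hx : ∀ r, x.coeff r ∈ I)
    (hy : ∀ r, y.coeff r ∈ I) (r : ℕ) : (x + y).coeff r ∈ I := by
  have := wcoeff_sub I x (-y) hx (fun r => ?_) r
  · rwa [sub_neg_eq_add] at this
  · have : (0 : 𝕎 S) - y = -y := by rw [zero_sub]
    rw [← this]
    exact wcoeff_sub I 0 y (fun r => by rw [zero_coeff]; exact I.zero_mem) hy r

theorem wcoeff_sum (I : Ideal S) {ι : Type*} (T : Finset ι) (F : ι → 𝕎 S)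
    (h : ∀ g ∈ T, ∀ r, (F g).coeff r ∈ I) : ∀ r, (∑ g ∈ T, F g).coeff r ∈ I := by
  classical
  induction T using Finset.induction_on with
  | empty => intro r; simpa using I.zero_mem
  | insert _ _ hni ih =>
    rename_i a T'
    intro r
    rw [Finset.sum_insert hni]
    exact wcoeff_add I _ _ (h a (Finset.mem_insert_self a T'))
      (ih (fun g hg r => h g (Finset.mem_insert_of_mem hg) r)) r

theorem wcoeff_mul (I J : Ideal S) (x y : 𝕎 S) (hx : ∀ r, x.coeff r ∈ I)
    (hy : ∀ r, y.coeff r ∈ J) (r : ℕ) : (x * y).coeff r ∈ I * J := by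
  set A := quadSubring (S := S) I J with hA
  let π1 : A →+* S := (RingHom.fst S (S × S × S)).comp A.subtype
  let π2 : A →+* S := ((RingHom.fst S (S × S)).comp ((RingHom.snd S (S × S × S)).comp A.subtype))
  let π3 : A →+* S := ((RingHom.fst S S).comp ((RingHom.snd S (S × S)).comp
    ((RingHom.snd S (S × S × S)).comp A.subtype)))
  let π4 : A →+* S := ((RingHom.snd S S).comp ((RingHom.snd S (S × S)).comp
    ((RingHom.snd S (S × S × S)).comp A.subtype)))
  have memA : ∀ z : S × S × S × S, z ∈ A ↔ (z.2.1 - z.1 ∈ I ∧ z.2.2.1 - z.1 ∈ J ∧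
      z.2.2.2 - z.2.1 - z.2.2.1 + z.1 ∈ I * J) := fun z => Iff.rfl
  let X : 𝕎 A := WittVector.mk p fun r => ⟨(0, x.coeff r, 0, x.coeff r), by
    rw [memA]
    refine ⟨by simpa using hx r, by simpa using J.zero_mem, by simpa using (I * J).zero_mem⟩⟩
  let Y : 𝕎 A := WittVector.mk p fun r => ⟨(0, 0, y.coeff r, y.coeff r), by
    rw [memA]
    refine ⟨by simpa using I.zero_mem, by simpa using hy r, by simpa using (I * J).zero_mem⟩⟩
  have hX1 : map π1 X = 0 := by ext r; rw [map_coeff, zero_coeff]; rfl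
  have hY1 : map π1 Y = 0 := by ext r; rw [map_coeff, zero_coeff]; rfl
  have hX2 : map π2 X = x := by ext r; rw [map_coeff]; rfl
  have hY2 : map π2 Y = 0 := by ext r; rw [map_coeff, zero_coeff]; rfl
  have hX3 : map π3 X = 0 := by ext r; rw [map_coeff, zero_coeff]; rfl
  have hY3 : map π3 Y = y := by ext r; rw [map_coeff]; rfl
  have hX4 : map π4 X = x := by ext r; rw [map_coeff]; rfl
  have hY4 : map π4 Y = y := by ext r; rw [map_coeff]; rfl
  have key : π4 ((X * Y).coeff r) - π2 ((X * Y).coeff r) - π3 ((X * Y).coeff r)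
      + π1 ((X * Y).coeff r) ∈ I * J := ((X * Y).coeff r).property.2.2
  have e1 : π1 ((X * Y).coeff r) = 0 := by
    rw [← map_coeff, map_mul, hX1, hY1, zero_mul, zero_coeff]
  have e2 : π2 ((X * Y).coeff r) = 0 := by
    rw [← map_coeff, map_mul, hX2, hY2, mul_zero, zero_coeff]
  have e3 : π3 ((X * Y).coeff r) = 0 := by
    rw [← map_coeff, map_mul, hX3, hY3, zero_mul, zero_coeff]
  have e4 : π4 ((X * Y).coeff r) = (x * y).coeff r := by
    rw [← map_coeff, map_mul, hX4, hY4]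
  rwa [e1, e2, e3, e4, sub_zero, sub_zero, add_zero] at key



theorem iterate_verschiebung_coeff_lt {x : 𝕎 S} {k r : ℕ} (h : r < k) :
    (verschiebung^[k] x).coeff r = 0 := by
  induction k generalizing r with
  | zero => omega
  | succ k ih =>
    rw [Function.iterate_succ_apply']
    cases r with
    | zero => exact verschiebung_coeff_zero _
    | succ r => rw [verschiebung_coeff_succ]; exact ih (by omega)

theorem iterate_verschiebung_coeff_self (x : 𝕎 S) (k : ℕ) :
    (verschiebung^[k] x).coeff k = x.coeff 0 := by
  have := iterate_verschiebung_coeff (p := p) x k 0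
  rwa [zero_add] at this

theorem leading_coeff_add {x y : 𝕎 S} {k : ℕ} (hx : ∀ r < k, x.coeff r = 0)
    (hy : ∀ r < k, y.coeff r = 0) : (x + y).coeff k = x.coeff k + y.coeff k := by
  have ex := WittVector.eq_iterate_verschiebung (p := p) hx
  have ey := WittVector.eq_iterate_verschiebung (p := p) hy
  calc (x + y).coeff k
      = (verschiebung^[k] (x.shift k + y.shift k)).coeff k := by
        rw [iterate_map_add, ← ex, ← ey]
    _ = x.coeff k + y.coeff k := by
        rw [iterate_verschiebung_coeff_self, add_coeff_zero, shift_coeff, shift_coeff, add_zero]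

theorem neg_coeff_first {y : 𝕎 S} {k : ℕ} (hy : ∀ r < k, y.coeff r = 0) :
    (∀ r < k, (-y).coeff r = 0) ∧ (-y).coeff k = -(y.coeff k) := by
  have ey := WittVector.eq_iterate_verschiebung (p := p) hy
  have e : -y = verschiebung^[k] (-(y.shift k)) := by
    rw [iterate_map_neg, ← ey]
  constructor
  · intro r hr; rw [e]; exact iterate_verschiebung_coeff_lt hr
  · rw [e, iterate_verschiebung_coeff_self]
    have hz : ∀ z : 𝕎 S, (-z).coeff 0 = -(z.coeff 0) := fun z => by
      simpa using map_neg (WittVector.constantCoeff (p := p)) z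
    rw [hz, shift_coeff, add_zero]

theorem leading_coeff_sub {x y : 𝕎 S} {k : ℕ} (hx : ∀ r < k, x.coeff r = 0)
    (hy : ∀ r < k, y.coeff r = 0) : (x - y).coeff k = x.coeff k - y.coeff k := by
  obtain ⟨h1, h2⟩ := neg_coeff_first (p := p) hy
  rw [sub_eq_add_neg, leading_coeff_add hx h1, h2, sub_eq_add_neg]

theorem leading_coeff_sum {ι : Type*} (T : Finset ι) (F : ι → 𝕎 S) (k : ℕ)
    (h : ∀ g ∈ T, ∀ r < k, (F g).coeff r = 0) :
    (∀ r < k, (∑ g ∈ T, F g).coeff r = 0) ∧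
      (∑ g ∈ T, F g).coeff k = ∑ g ∈ T, (F g).coeff k := by
  classical
  induction T using Finset.induction_on with
  | empty => simp
  | insert _ _ hni ih =>
    rename_i a T'
    have hh := ih (fun g hg => h g (Finset.mem_insert_of_mem hg))
    have ha := h a (Finset.mem_insert_self a T')
    constructor
    · intro r hr
      rw [Finset.sum_insert hni]
      have := leading_coeff_add (p := p) (k := r)
        (fun s hs => ha s (by omega)) (fun s hs => hh.1 s (by omega))
      rw [this, ha r hr, hh.1 r hr, add_zero]
    · rw [Finset.sum_insert hni, Finset.sum_insert hni,
        leading_coeff_add (p := p) ha hh.1, hh.2]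

theorem coeff_iterate_verschiebung_teichmuller (b : S) (k r : ℕ) :
    (verschiebung^[k] (teichmuller p b)).coeff r = if r = k then b else 0 := by
  rcases lt_trichotomy r k with h | h | h
  · rw [iterate_verschiebung_coeff_lt h, if_neg (by omega)]
  · subst h
    rw [iterate_verschiebung_coeff_self, teichmuller_coeff_zero, if_pos rfl]
  · obtain ⟨m, rfl⟩ : ∃ m, r = m + k := ⟨r - k, by omega⟩
    rw [iterate_verschiebung_coeff, teichmuller_coeff_pos _ _ m (by omega), if_neg (by omega)]

theorem mem_wittIdeal_iff {n : ℕ} (I : Ideal S) (x : TruncatedWittVector p n S) :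
    x ∈ wittIdeal p n I ↔ ∀ i, x.coeff i ∈ I := by
  simp only [wittIdeal, RingHom.mem_ker]
  constructor
  · intro hx i
    have := congrArg (fun z => TruncatedWittVector.coeff i z) hx
    simp only [TruncatedWittVector.map_coeff', TruncatedWittVector.coeff_zero] at this
    exact Ideal.Quotient.eq_zero_iff_mem.mp this
  · intro h
    apply TruncatedWittVector.ext
    intro i
    rw [TruncatedWittVector.map_coeff', TruncatedWittVector.coeff_zero]
    exact Ideal.Quotient.eq_zero_iff_mem.mpr (h i)

theorem truncate_out' {n : ℕ} (x : TruncatedWittVector p n S) :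
    WittVector.truncate n x.out = x := by
  apply TruncatedWittVector.ext
  intro i
  rw [WittVector.coeff_truncate, TruncatedWittVector.coeff_out]

theorem out_coeff_mem {n : ℕ} (I : Ideal S) (x : TruncatedWittVector p n S)
    (h : ∀ i, x.coeff i ∈ I) (r : ℕ) : x.out.coeff r ∈ I := by
  by_cases hr : r < n
  · have := TruncatedWittVector.coeff_out x (⟨r, hr⟩ : Fin n)
    rw [this]
    exact h _
  · have : x.out.coeff r = 0 := by
      simp [TruncatedWittVector.out, WittVector.coeff_mk, hr]
    rw [this]; exact I.zero_mem

theorem tcoeff_mul {n : ℕ} (I J : Ideal S) (x y : TruncatedWittVector p n S)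
    (hx : ∀ i, x.coeff i ∈ I) (hy : ∀ i, y.coeff i ∈ J) (i : Fin n) :
    (x * y).coeff i ∈ I * J := by
  have hxy : x * y = WittVector.truncate n (x.out * y.out) := by
    rw [map_mul, truncate_out', truncate_out']
  rw [hxy, WittVector.coeff_truncate]
  exact wcoeff_mul I J x.out y.out (out_coeff_mem I x hx) (out_coeff_mem J y hy) i

theorem wittIdeal_mono {n : ℕ} {I J : Ideal S} (h : I ≤ J) :
    wittIdeal p n I ≤ wittIdeal p n J := by
  intro x hx
  rw [mem_wittIdeal_iff] at hx ⊢
  exact fun i => h (hx i)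

theorem wittIdeal_pow_le (n : ℕ) (I : Ideal S) (i : ℕ) (hi : 1 ≤ i) :
    (wittIdeal p n I) ^ i ≤ wittIdeal p n (I ^ i) := by
  induction i, hi using Nat.le_induction with
  | base => rw [pow_one, pow_one]
  | succ i hi ih =>
    rw [pow_succ, pow_succ]
    refine Ideal.mul_le.mpr fun a ha b hb => ?_
    rw [mem_wittIdeal_iff]
    exact fun r => tcoeff_mul _ _ _ _
      (fun r => (mem_wittIdeal_iff _ _).mp (ih ha) r)
      (fun r => (mem_wittIdeal_iff _ _).mp hb r) r

theorem teichmuller_coeff (u : S) (r : ℕ) :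
    (teichmuller p u).coeff r = if r = 0 then u else 0 := by
  simpa using coeff_iterate_verschiebung_teichmuller (p := p) u 0 r

/-- Generating set used in the second inclusion. -/
def genSet (I : Ideal S) (N : ℕ) : Set S := {g | ∃ f ∈ I, ∃ b ∈ I, g = f ^ N * b}

theorem vteich_mem_pow {n : ℕ} (I : Ideal S) (i : ℕ) (hi : 1 ≤ i) (k : ℕ) (hk : k < n)
    (f b : S) (hf : f ∈ I) (hb : b ∈ I) :
    WittVector.truncate n (verschiebung^[k] (teichmuller p (f ^ ((i - 1) * p ^ (n - 1)) * b)))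
      ∈ (wittIdeal p n I) ^ i := by
  set u := f ^ (p ^ (n - 1 - k)) with hu
  have hu_mem : u ∈ I := Ideal.pow_mem_of_mem I hf _ (pow_pos hp.1.pos _)
  have hd : (u ^ (i - 1)) ^ (p ^ k) = f ^ ((i - 1) * p ^ (n - 1)) := by
    rw [hu, ← pow_mul, ← pow_mul]
    congr 1
    have e1 : p ^ (n - 1 - k) * p ^ k = p ^ (n - 1) := by
      rw [← pow_add]
      congr 1
      omega
    calc p ^ (n - 1 - k) * ((i - 1) * p ^ k)
        = (i - 1) * (p ^ (n - 1 - k) * p ^ k) := by ring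
      _ = (i - 1) * p ^ (n - 1) := by rw [e1]
  have key : verschiebung^[k] (teichmuller p (f ^ ((i - 1) * p ^ (n - 1)) * b))
      = verschiebung^[k] (teichmuller p b) * (teichmuller p u) ^ (i - 1) := by
    rw [iterate_verschiebung_mul_left, ← map_pow, frob_teich_iter, hd, ← map_mul,
      mul_comm b]
  rw [key, map_mul, map_pow]
  have h1 : WittVector.truncate n (verschiebung^[k] (teichmuller p b)) ∈ wittIdeal p n I := by
    rw [mem_wittIdeal_iff]
    intro r
    rw [WittVector.coeff_truncate, coeff_iterate_verschiebung_teichmuller]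
    split_ifs
    · exact hb
    · exact I.zero_mem
  have h2 : WittVector.truncate n (teichmuller p u) ∈ wittIdeal p n I := by
    rw [mem_wittIdeal_iff]
    intro r
    rw [WittVector.coeff_truncate, teichmuller_coeff]
    split_ifs
    · exact hu_mem
    · exact I.zero_mem
  have hBi : (wittIdeal p n I) * (wittIdeal p n I) ^ (i - 1) = (wittIdeal p n I) ^ i := by
    rw [← pow_succ']
    congr 1
    omega
  rw [← hBi]
  exact Ideal.mul_mem_mul h1 (Ideal.pow_mem_pow h2 _)

theorem main_claim (n : ℕ) (I : Ideal S) (i : ℕ) (hi : 1 ≤ i) :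
    ∀ d k, k + d = n → ∀ x : 𝕎 S,
      (∀ r, x.coeff r ∈ Ideal.span (genSet I ((i - 1) * p ^ (n - 1)))) →
      (∀ r < k, x.coeff r = 0) →
      WittVector.truncate n x ∈ (wittIdeal p n I) ^ i := by
  intro d
  induction d with
  | zero =>
    intro k hk x hJ h0
    have hx0 : WittVector.truncate n x = 0 := by
      rw [← RingHom.mem_ker, WittVector.mem_ker_truncate]
      intro r hr
      exact h0 r (by omega)
    rw [hx0]
    exact Ideal.zero_mem _
  | succ d ih =>
    intro k hk x hJ h0
    have hkn : k < n := by omega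
    set N := (i - 1) * p ^ (n - 1) with hN
    have ha : x.coeff k ∈ Ideal.span (genSet I N) := hJ k
    obtain ⟨c, hsupp, hsum⟩ := Submodule.mem_span_set.mp ha
    set z : 𝕎 S := ∑ g ∈ c.support, verschiebung^[k] (teichmuller p (c g * g)) with hz
    have hterm0 : ∀ g ∈ c.support, ∀ r < k,
        (verschiebung^[k] (teichmuller p (c g * g))).coeff r = 0 :=
      fun g _ r hr => iterate_verschiebung_coeff_lt hr
    have hzJ : ∀ r, z.coeff r ∈ Ideal.span (genSet I N) := by
      apply wcoeff_sum
      intro g hg r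
      rw [coeff_iterate_verschiebung_teichmuller]
      split_ifs
      · exact Ideal.mul_mem_left _ _ (Ideal.subset_span (hsupp hg))
      · exact Ideal.zero_mem _
    have hlead := leading_coeff_sum (p := p) c.support _ k hterm0
    have hz0 : ∀ r < k, z.coeff r = 0 := hlead.1
    have hzk : z.coeff k = x.coeff k := by
      have hterm : ∀ g ∈ c.support,
          (verschiebung^[k] (teichmuller p (c g * g))).coeff k = c g * g := fun g _ => by
        rw [coeff_iterate_verschiebung_teichmuller, if_pos rfl]
      rw [hz, hlead.2, Finset.sum_congr rfl hterm, ← hsum]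
      rfl
    have hzB : WittVector.truncate n z ∈ (wittIdeal p n I) ^ i := by
      rw [hz, map_sum]
      apply Ideal.sum_mem
      intro g hg
      obtain ⟨f, hf, b, hb, hgfb⟩ := hsupp hg
      have hcg : c g * g = f ^ N * (c g * b) := by rw [hgfb]; ring
      rw [hcg]
      exact vteich_mem_pow I i hi k hkn f (c g * b) hf (Ideal.mul_mem_left _ _ hb)
    have hx'J : ∀ r, (x - z).coeff r ∈ Ideal.span (genSet I N) :=
      wcoeff_sub _ x z hJ hzJ
    have hx'0 : ∀ r < k + 1, (x - z).coeff r = 0 := by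
      intro r hr
      rcases Nat.lt_or_ge r k with h | h
      · rw [leading_coeff_sub (p := p) (k := r) (fun s hs => h0 s (by omega))
          (fun s hs => hz0 s (by omega)), h0 r h, hz0 r h, sub_zero]
      · have : r = k := by omega
        subst this
        rw [leading_coeff_sub (p := p) h0 hz0, hzk, sub_self]
    have hmem := ih (k + 1) (by omega) (x - z) hx'J hx'0
    have hxz : WittVector.truncate n x
        = WittVector.truncate n (x - z) + WittVector.truncate n z := by
      rw [← map_add]
      congr 1
      ring
    rw [hxz]
    exact Ideal.add_mem _ hmem hzB

end WittAux

theorem stmt_6 (p : ℕ) [Fact p.Prime] (n : ℕ) (hn : 1 ≤ n)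
    (R : Type*) [CommRing R] [Algebra.FiniteType ℤ R]
    (𝔪 : Ideal R) [𝔪.IsMaximal] [CharP (R ⧸ 𝔪) p] :
    (∀ i : ℕ, 1 ≤ i → ∃ j : ℕ, 1 ≤ j ∧
      (wittIdeal p n (𝔪.map (algebraMap R (Localization.AtPrime 𝔪)))) ^ j ≤
        wittIdeal p n ((𝔪 ^ i).map (algebraMap R (Localization.AtPrime 𝔪)))) ∧
    (∀ i : ℕ, 1 ≤ i → ∃ j : ℕ, 1 ≤ j ∧
      wittIdeal p n ((𝔪 ^ j).map (algebraMap R (Localization.AtPrime 𝔪))) ≤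
        (wittIdeal p n (𝔪.map (algebraMap R (Localization.AtPrime 𝔪)))) ^ i) := by
  classical
  set S' := Localization.AtPrime 𝔪 with hS'
  set 𝔫 : Ideal S' := 𝔪.map (algebraMap R S') with h𝔫
  constructor
  · intro i hi
    refine ⟨i, hi, ?_⟩
    rw [Ideal.map_pow]
    exact wittIdeal_pow_le n 𝔫 i hi
  · intro i hi
    haveI hNR : IsNoetherianRing R := Algebra.FiniteType.isNoetherianRing ℤ R
    haveI hNS : IsNoetherianRing S' := IsLocalization.isNoetherianRing 𝔪.primeCompl S' hNR
    have hrad : 𝔫 ≤ (Ideal.span (genSet 𝔫 ((i - 1) * p ^ (n - 1)))).radical := by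
      intro f hf
      rw [Ideal.mem_radical_iff]
      exact ⟨(i - 1) * p ^ (n - 1) + 1,
        Ideal.subset_span ⟨f, hf, f, hf, pow_succ f _⟩⟩
    have hfg : 𝔫.FG := IsNoetherian.noetherian 𝔫
    obtain ⟨c, hc⟩ := Ideal.exists_pow_le_of_le_radical_of_fg hrad hfg
    refine ⟨max c 1, le_max_right _ _, ?_⟩
    rw [Ideal.map_pow]
    intro x hx
    rw [mem_wittIdeal_iff] at hx
    set y : WittVector p S' :=
      WittVector.mk p (fun r => if h : r < n then x.coeff ⟨r, h⟩ else 0) with hy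
    have hyx : WittVector.truncate n y = x := by
      apply TruncatedWittVector.ext
      intro r
      rw [WittVector.coeff_truncate]
      show (if h : (r : ℕ) < n then x.coeff ⟨r, h⟩ else 0) = x.coeff r
      rw [dif_pos r.isLt]
    have hcoeffs : ∀ r, y.coeff r ∈ Ideal.span (genSet 𝔫 ((i - 1) * p ^ (n - 1))) := by
      intro r
      show (if h : r < n then x.coeff ⟨r, h⟩ else 0) ∈ _
      split_ifs with h
      · exact hc (Ideal.pow_le_pow_right (le_max_left c 1) (hx ⟨r, h⟩))
      · exact Ideal.zero_mem _
    rw [← hyx]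
    exact main_claim n 𝔫 i hi n 0 (by omega) y hcoeffs
      (fun r hr => (Nat.not_lt_zero r hr).elim)
end

section
/- (Lemma 3.2.6(ii) of the paper.) Let A be a commutative ring and P a nonempty set of prime numbers; write ℤ_P for the localization of ℤ inverting all primes in P, and for p ∈ P write ℤ_{P∖{p}} for the localization of ℤ inverting all primes in P∖{p}. Let M and N be A-modules such that the canonical map N → N ⊗_ℤ ℤ_P, n ↦ n ⊗ 1, is injective. Suppose given for each p ∈ P an A-linear and ℤ_{P∖{p}}-linear map f_p : M ⊗_ℤ ℤ_{P∖{p}} → N ⊗_ℤ ℤ_{P∖{p}} such that for all p, ℓ ∈ P the further base changes f_p ⊗_{ℤ_{P∖{p}}} ℤ_P and f_ℓ ⊗_{ℤ_{P∖{ℓ}}} ℤ_P agree as maps M ⊗_ℤ ℤ_P → N ⊗_ℤ ℤ_P, under the canonical isomorphisms (M ⊗_ℤ ℤ_{P∖{p}}) ⊗_{ℤ_{P∖{p}}} ℤ_P ≅ M ⊗_ℤ ℤ_P. Then there exists a unique A-linear map f : M → N with f_p = f ⊗ id for every p ∈ P. -/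
/-!
Statement 14 (Lemma 3.2.6(ii)): Let `A` be a commutative ring, `P` a nonempty set of
primes, and `M`, `N` two `A`-modules such that `N → N ⊗_ℤ ℤ_P` is injective.  Given for
each `p ∈ P` an `A`-linear and `ℤ_{P∖{p}}`-linear map
`f_p : M ⊗_ℤ ℤ_{P∖{p}} → N ⊗_ℤ ℤ_{P∖{p}}` whose base changes to `ℤ_P` all agree, there
exists a unique `A`-linear map `F : M → N` with `f_p = F ⊗ id` for every `p ∈ P`.
-/

open scoped TensorProduct

/-- `ℤ` with the primes in `Q` inverted. -/
abbrev ZLoc (Q : Set ℕ) : Type :=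
  Localization (Submonoid.closure ((Nat.cast : ℕ → ℤ) '' Q))

/-- The canonical ring homomorphism `ℤ_Q → ℤ_{Q'}` for `Q ⊆ Q'`. -/
noncomputable def zlocMap {Q Q' : Set ℕ} (h : Q ⊆ Q') : ZLoc Q →+* ZLoc Q' :=
  IsLocalization.map (M := Submonoid.closure ((Nat.cast : ℕ → ℤ) '' Q))
    (T := Submonoid.closure ((Nat.cast : ℕ → ℤ) '' Q')) _ (RingHom.id ℤ)
    (fun x hx => Submonoid.closure_mono (Set.image_mono h) hx)

noncomputable section Aux14

abbrev SQ14 (Q : Set ℕ) : Submonoid ℤ := Submonoid.closure ((Nat.cast : ℕ → ℤ) '' Q)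

/-- The canonical map `N → N ⊗ ℤ_Q`. -/
def iotaT (N : Type*) [AddCommGroup N] (Q : Set ℕ) : N →ₗ[ℤ] N ⊗[ℤ] ZLoc Q :=
  (TensorProduct.mk ℤ N (ZLoc Q)).flip 1

@[simp] lemma iotaT_apply {N : Type*} [AddCommGroup N] (Q : Set ℕ) (n : N) :
    iotaT N Q n = n ⊗ₜ[ℤ] 1 := rfl

lemma int_smul_tmul14 {N : Type*} [AddCommGroup N] (Q : Set ℕ) (s : ℤ) (n : N) (c : ZLoc Q) :
    s • (n ⊗ₜ[ℤ] c) = n ⊗ₜ[ℤ] (s • c) := by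
  induction s using Int.induction_on with
  | zero => simp
  | succ k ih => simp [add_smul, TensorProduct.tmul_add, ih, add_mul]
  | pred k ih => simp [sub_smul, TensorProduct.tmul_sub, ih, sub_mul]

lemma smul_eq_lTensor14 {N : Type*} [AddCommGroup N] (Q : Set ℕ) (s : ℤ) (x : N ⊗[ℤ] ZLoc Q) :
    s • x = LinearMap.lTensor N (LinearMap.mulLeft ℤ ((s : ZLoc Q))) x := by
  induction x using TensorProduct.induction_on with
  | zero => simp
  | tmul n c =>
      rw [LinearMap.lTensor_tmul, LinearMap.mulLeft_apply, int_smul_tmul14, zsmul_eq_mul]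
  | add x y hx hy => rw [smul_add, map_add, hx, hy]

lemma cancel14 {N : Type*} [AddCommGroup N] (Q : Set ℕ) {s : ℤ} (hs : s ∈ SQ14 Q)
    {u v : N ⊗[ℤ] ZLoc Q} (h : s • u = s • v) : u = v := by
  have hu : IsUnit ((s : ZLoc Q)) := by
    have := IsLocalization.map_units (M := SQ14 Q) (Localization (SQ14 Q)) ⟨s, hs⟩
    simpa using this
  obtain ⟨w, hw⟩ := hu
  rw [smul_eq_lTensor14, smul_eq_lTensor14] at h
  have h2 := congrArg (LinearMap.lTensor N (LinearMap.mulLeft ℤ ((w⁻¹ : (ZLoc Q)ˣ) : ZLoc Q))) h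
  rwa [← LinearMap.comp_apply, ← LinearMap.comp_apply, ← LinearMap.lTensor_comp,
    ← LinearMap.mulLeft_mul, ← hw, Units.inv_mul, LinearMap.mulLeft_one,
    LinearMap.lTensor_id, LinearMap.id_apply, LinearMap.id_apply] at h2

lemma surj14 {N : Type*} [AddCommGroup N] (Q : Set ℕ) (y : N ⊗[ℤ] ZLoc Q) :
    ∃ (n : N) (s : ℤ), s ∈ SQ14 Q ∧ s • y = n ⊗ₜ[ℤ] 1 := by
  induction y using TensorProduct.induction_on with
  | zero => exact ⟨0, 1, one_mem _, by simp⟩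
  | tmul n c =>
      induction c using Localization.induction_on with
      | H y =>
        obtain ⟨a, s⟩ := y
        refine ⟨a • n, (s : ℤ), s.2, ?_⟩
        dsimp only
        rw [int_smul_tmul14]
        have hc : ((s : ℤ)) • (Localization.mk a s : ZLoc Q) = Localization.mk a 1 := by
          rw [zsmul_eq_mul,
            show (((s : ℤ)) : ZLoc Q) = Localization.mk ((s : ℤ)) 1 from by
              rw [Localization.mk_one_eq_algebraMap, eq_intCast],
            Localization.mk_mul, one_mul, mul_comm,
            show (Localization.mk (a * (s : ℤ)) s : ZLoc Q)
                = Localization.mk a 1 * Localization.mk ((s : ℤ)) s from by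
              rw [Localization.mk_mul, one_mul],
            Localization.mk_self, mul_one]
        rw [hc,
          show ((a • n : N)) ⊗ₜ[ℤ] (1 : ZLoc Q) = a • (n ⊗ₜ[ℤ] (1 : ZLoc Q)) from
            (TensorProduct.smul_tmul' a n 1).symm,
          int_smul_tmul14]
        congr 1
        rw [zsmul_eq_mul, mul_one, Localization.mk_one_eq_algebraMap, eq_intCast]
  | add x y hx hy =>
      obtain ⟨n₁, s₁, hs₁, h₁⟩ := hx
      obtain ⟨n₂, s₂, hs₂, h₂⟩ := hy
      refine ⟨s₂ • n₁ + s₁ • n₂, s₁ * s₂, mul_mem hs₁ hs₂, ?_⟩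
      have e1 : (s₁ * s₂) • x = (s₂ • n₁) ⊗ₜ[ℤ] (1 : ZLoc Q) := by
        rw [mul_comm, mul_smul, h₁, TensorProduct.smul_tmul']
      have e2 : (s₁ * s₂) • y = (s₁ • n₂) ⊗ₜ[ℤ] (1 : ZLoc Q) := by
        rw [mul_smul, h₂, TensorProduct.smul_tmul']
      rw [smul_add, e1, e2, TensorProduct.add_tmul]

/-- The map `N ⊗ ℤ_{P∖{p}} → N ⊗ ℤ_P`. -/
def Jmap (N : Type*) [AddCommGroup N] (P : Set ℕ) (p : ℕ) :
    N ⊗[ℤ] ZLoc (P \ {p}) →ₗ[ℤ] N ⊗[ℤ] ZLoc P :=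
  LinearMap.lTensor N
    ((zlocMap (Set.diff_subset (s := P) (t := {p}))).toAddMonoidHom.toIntLinearMap)

lemma Jmap_iotaT {N : Type*} [AddCommGroup N] (P : Set ℕ) (p : ℕ) (n : N) :
    Jmap N P p (iotaT N (P \ {p}) n) = iotaT N P n := by
  rw [Jmap, iotaT_apply, iotaT_apply]
  exact (LinearMap.lTensor_tmul _ _ _ _).trans
    (congrArg (fun c => n ⊗ₜ[ℤ] c) (map_one (zlocMap (Set.diff_subset (s := P) (t := {p})))))

lemma lTensor_smulA {A M R₁ R₂ : Type*} [CommRing A] [AddCommGroup M] [Module A M]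
    [AddCommGroup R₁] [AddCommGroup R₂] (g : R₁ →ₗ[ℤ] R₂) (a : A) (x : M ⊗[ℤ] R₁) :
    LinearMap.lTensor M g (a • x) = a • LinearMap.lTensor M g x := by
  induction x using TensorProduct.induction_on with
  | zero => simp
  | tmul m r =>
      rw [TensorProduct.smul_tmul', LinearMap.lTensor_tmul, LinearMap.lTensor_tmul,
        TensorProduct.smul_tmul']
  | add x y hx hy => rw [smul_add, map_add, map_add, hx, hy, smul_add]

lemma iotaT_smulA {A N : Type*} [CommRing A] [AddCommGroup N] [Module A N] (Q : Set ℕ)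
    (a : A) (n : N) : iotaT N Q (a • n) = a • iotaT N Q n :=
  (TensorProduct.smul_tmul' a n (1 : ZLoc Q)).symm

end Aux14

theorem stmt_14 (A : Type*) [CommRing A] (P : Set ℕ) (hP : ∀ p ∈ P, p.Prime)
    (hne : P.Nonempty) (M N : Type*) [AddCommGroup M] [AddCommGroup N]
    [Module A M] [Module A N]
    (hinj : Function.Injective fun x : N => (x ⊗ₜ[ℤ] (1 : ZLoc P) : N ⊗[ℤ] ZLoc P))
    (f : ∀ p ∈ P, (M ⊗[ℤ] ZLoc (P \ {p})) →ₗ[A] (N ⊗[ℤ] ZLoc (P \ {p})))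
    -- each `f p` is moreover `ℤ_{P∖{p}}`-linear
    (hlin : ∀ (p) (hp : p ∈ P) (c : ZLoc (P \ {p})) (x : M ⊗[ℤ] ZLoc (P \ {p})),
      f p hp (LinearMap.lTensor M (LinearMap.mulLeft ℤ c) x) =
        LinearMap.lTensor N (LinearMap.mulLeft ℤ c) (f p hp x))
    -- the base changes of the `f p` to `ℤ_P` all agree
    (hcompat : ∀ (p) (hp : p ∈ P) (ℓ) (hℓ : ℓ ∈ P) (m : M),
      LinearMap.lTensor N ((zlocMap (Set.diff_subset (s := P) (t := {p}))).toAddMonoidHom.toIntLinearMap)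
          (f p hp (m ⊗ₜ[ℤ] 1)) =
        LinearMap.lTensor N ((zlocMap (Set.diff_subset (s := P) (t := {ℓ}))).toAddMonoidHom.toIntLinearMap)
          (f ℓ hℓ (m ⊗ₜ[ℤ] 1))) :
    ∃! F : M →ₗ[A] N, ∀ (p) (hp : p ∈ P) (x : M ⊗[ℤ] ZLoc (P \ {p})),
      f p hp x = LinearMap.rTensor (ZLoc (P \ {p})) (F.restrictScalars ℤ) x := by
  classical
  obtain ⟨p₀, hp₀⟩ := hne
  have hιinj : Function.Injective (iotaT N P) := fun a b h => hinj h
  have hJι : ∀ (p : ℕ) (n : N), Jmap N P p (iotaT N (P \ {p}) n) = iotaT N P n :=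
    fun p n => Jmap_iotaT P p n
  have hι'inj : ∀ p : ℕ, Function.Injective (iotaT N (P \ {p})) := by
    intro p a b h
    exact hιinj (by rw [← hJι p a, ← hJι p b, h])
  have hJinj : ∀ p : ℕ, Function.Injective (Jmap N P p) := by
    intro p a b hab
    have hz : ∀ z, Jmap N P p z = 0 → z = 0 := by
      intro z h0
      obtain ⟨m, s, hs, hm⟩ := surj14 (P \ {p}) z
      have hm' : s • z = iotaT N (P \ {p}) m := hm
      have h1 : iotaT N P m = 0 := by
        rw [← hJι p, ← hm', map_smul, h0, smul_zero]
      have h2 : m = 0 := by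
        apply hιinj; rw [h1, map_zero]
      exact cancel14 (P \ {p}) hs (by rw [hm', h2, map_zero, smul_zero])
    have := hz (a - b) (by rw [map_sub, hab, sub_self])
    exact sub_eq_zero.mp this
  have hndvd : ∀ p ∈ P, ∀ s ∈ SQ14 (P \ {p}), ¬ ((p : ℤ) ∣ s) := by
    intro p hp s hs
    induction hs using Submonoid.closure_induction with
    | mem x hx =>
        obtain ⟨q, hq, rfl⟩ := hx
        intro hdvd
        have : p ∣ q := Int.natCast_dvd_natCast.mp hdvd
        exact hq.2 (((Nat.prime_dvd_prime_iff_eq (hP p hp) (hP q hq.1)).mp this).symm)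
    | one => exact (Nat.prime_iff_prime_int.mp (hP p hp)).not_dvd_one
    | mul x y hx hy ihx ihy =>
        intro hdvd
        rcases (Nat.prime_iff_prime_int.mp (hP p hp)).dvd_mul.mp hdvd with h | h
        exacts [ihx h, ihy h]
  -- key descent lemma
  have key : ∀ y : N ⊗[ℤ] ZLoc P, (∀ p (hp : p ∈ P), ∃ z, Jmap N P p z = y) →
      ∃ n, iotaT N P n = y := by
    have core : ∀ s ∈ SQ14 P, ∀ y : N ⊗[ℤ] ZLoc P,
        (∀ p (hp : p ∈ P), ∃ z, Jmap N P p z = y) →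
        (∃ n, iotaT N P n = s • y) → ∃ n, iotaT N P n = y := by
      intro s hs
      induction hs using Submonoid.closure_induction with
      | one =>
          intro y _ hn
          obtain ⟨n, hn⟩ := hn
          exact ⟨n, by rwa [one_smul] at hn⟩
      | mul a b ha hb iha ihb =>
          intro y hy hn
          obtain ⟨n, hn⟩ := hn
          refine ihb y hy (iha (b • y) ?_ ⟨n, by rw [hn, mul_smul]⟩)
          intro p hp
          obtain ⟨z, hz⟩ := hy p hp
          exact ⟨b • z, by rw [map_smul, hz]⟩
      | mem x hx =>
          obtain ⟨p, hpP, rfl⟩ := hx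
          intro y hy hn
          obtain ⟨n, hn⟩ := hn
          obtain ⟨z, hz⟩ := hy p hpP
          have h2 : ((p : ℕ) : ℤ) • z = iotaT N (P \ {p}) n := by
            apply hJinj p
            rw [map_smul, hz, hJι, hn]
          obtain ⟨m, s, hsmem, hm⟩ := surj14 (P \ {p}) z
          have hm' : s • z = iotaT N (P \ {p}) m := hm
          have h3 : ((p : ℕ) : ℤ) • m = s • n := by
            apply hι'inj p
            rw [map_smul, map_smul, ← hm', ← h2, smul_smul, smul_smul, mul_comm]
          have hcop : IsCoprime ((p : ℕ) : ℤ) s :=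
            ((Nat.prime_iff_prime_int.mp (hP p hpP)).irreducible.coprime_iff_not_dvd).mpr
              (hndvd p hpP s hsmem)
          obtain ⟨u, v, huv⟩ := hcop
          refine ⟨u • n + v • m, ?_⟩
          have h4 : ((p : ℕ) : ℤ) • (u • n + v • m) = n := by
            rw [smul_add, smul_comm ((p : ℕ) : ℤ) u, smul_comm ((p : ℕ) : ℤ) v, h3,
              smul_smul, smul_smul, ← add_smul, huv, one_smul]
          apply cancel14 P (Submonoid.subset_closure ⟨p, hpP, rfl⟩)
          rw [← map_smul, h4, hn]
    intro y hy
    obtain ⟨n, s, hs, hsy⟩ := surj14 P y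
    exact core s hs y hy ⟨n, hsy.symm⟩
  have hYex : ∀ m : M, ∃ n, iotaT N P n = Jmap N P p₀ (f p₀ hp₀ (m ⊗ₜ[ℤ] 1)) := by
    intro m
    apply key
    intro p hp
    exact ⟨f p hp (m ⊗ₜ[ℤ] 1), hcompat p hp p₀ hp₀ m⟩
  let g : M → N := fun m => (hYex m).choose
  have hg : ∀ m, iotaT N P (g m) = Jmap N P p₀ (f p₀ hp₀ (m ⊗ₜ[ℤ] 1)) :=
    fun m => (hYex m).choose_spec
  have hJsmulA : ∀ (p : ℕ) (a : A) (x : N ⊗[ℤ] ZLoc (P \ {p})),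
      Jmap N P p (a • x) = a • Jmap N P p x := fun p a x => lTensor_smulA _ a x
  let F : M →ₗ[A] N :=
    { toFun := g
      map_add' := fun m m' => hιinj (by
        rw [map_add, hg, hg, hg, ← map_add, ← map_add, ← TensorProduct.add_tmul])
      map_smul' := fun a m => hιinj (by
        simp only [RingHom.id_apply]
        rw [hg,
          show ((a • m : M) ⊗ₜ[ℤ] (1 : ZLoc (P \ {p₀}))) = a • (m ⊗ₜ[ℤ] (1 : ZLoc (P \ {p₀})))
            from (TensorProduct.smul_tmul' a m 1).symm,
          (f p₀ hp₀).map_smul a (m ⊗ₜ[ℤ] 1), hJsmulA, iotaT_smulA, hg]) }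
  have hkey2 : ∀ (p) (hp : p ∈ P) (m : M),
      f p hp (m ⊗ₜ[ℤ] 1) = iotaT N (P \ {p}) (F m) := by
    intro p hp m
    apply hJinj p
    rw [hJι]
    have hFg : iotaT N P (F m) = Jmap N P p₀ (f p₀ hp₀ (m ⊗ₜ[ℤ] 1)) := hg m
    rw [hFg]
    exact hcompat p hp p₀ hp₀ m
  refine ⟨F, ?_, ?_⟩
  · intro p hp x
    induction x using TensorProduct.induction_on with
    | zero => rw [map_zero, map_zero]
    | add x y hx hy => rw [map_add, map_add, hx, hy]
    | tmul m c =>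
        have h1 : (m ⊗ₜ[ℤ] c : M ⊗[ℤ] ZLoc (P \ {p})) =
            LinearMap.lTensor M (LinearMap.mulLeft ℤ c) (m ⊗ₜ[ℤ] 1) := by
          rw [LinearMap.lTensor_tmul, LinearMap.mulLeft_apply, mul_one]
        rw [h1, hlin p hp, hkey2 p hp m, iotaT_apply, LinearMap.lTensor_tmul,
          LinearMap.lTensor_tmul, LinearMap.rTensor_tmul, LinearMap.restrictScalars_apply]
  · intro F' hF'
    ext m
    have h1 := hF' p₀ hp₀ (m ⊗ₜ[ℤ] 1)
    have h2 : f p₀ hp₀ (m ⊗ₜ[ℤ] 1) = iotaT N (P \ {p₀}) (F m) := hkey2 p₀ hp₀ m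
    apply hι'inj p₀
    rw [← h2, h1, LinearMap.rTensor_tmul, iotaT_apply, LinearMap.restrictScalars_apply]
end
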